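/- arXiv:0708.0714 — 4 statements merged into one kernel-verified Lean document; each statement's English description precedes it below -/
import Mathlib

section
/- The minimal faithful permutation degree of a non-trivial finite abelian group A, with direct product decomposition A ≅ A₁ × ... × Aₙ into non-trivial cyclic groups of prime power orders a₁, ..., aₙ, equals a₁ + ... + aₙ. -/
open Multiplicative

/-- Cyclic group of order m, multiplicatively. -/
abbrev Cyc (m : ℕ) := Multiplicative (ZMod m)

/-- Minimal faithful permutation degree. -/
noncomputable def mu (G : Type*) [Group G] : ℕ :=
  sInf {n | ∃ f : G →* Equiv.Perm (Fin n), Function.Injective f}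

open Subgroup

universe u v

section Helpers

lemma orderOf_dvd_of_mem_zpowers' {A : Type*} [Group A] [Finite A] {w y : A}
    (h : y ∈ zpowers w) : orderOf y ∣ orderOf w := by
  have : orderOf y ∣ Nat.card (zpowers w) := by
    rw [← Subgroup.orderOf_mk y h]
    exact orderOf_dvd_natCard _
  rwa [Nat.card_zpowers] at this

/-- In a commutative group, if `H ⊓ K = ⊥` and `H ⊔ K = ⊤` then `K ≃* A ⧸ H`. -/
noncomputable def quotEquivOfCompl {A : Type*} [CommGroup A] {H K : Subgroup A}
    (hd : H ⊓ K = ⊥) (hs : H ⊔ K = ⊤) : K ≃* A ⧸ H := by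
  apply MulEquiv.ofBijective ((QuotientGroup.mk' H).comp K.subtype)
  constructor
  · rw [← MonoidHom.ker_eq_bot_iff]
    rw [eq_bot_iff]
    intro x hx
    simp only [MonoidHom.mem_ker, MonoidHom.comp_apply, QuotientGroup.mk'_apply,
      coe_subtype, QuotientGroup.eq_one_iff] at hx
    have hxk : (x : A) ∈ H ⊓ K := ⟨hx, x.2⟩
    rw [hd, Subgroup.mem_bot] at hxk
    rw [Subgroup.mem_bot]
    exact Subtype.ext hxk
  · intro q
    obtain ⟨y, rfl⟩ := QuotientGroup.mk'_surjective H q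
    have hy : y ∈ H ⊔ K := hs ▸ Subgroup.mem_top y
    obtain ⟨h, hh, z, hz, rfl⟩ := Subgroup.mem_sup.mp hy
    refine ⟨⟨z, hz⟩, ?_⟩
    simp only [MonoidHom.comp_apply, coe_subtype, QuotientGroup.mk'_apply]
    rw [QuotientGroup.eq]
    simpa using H.inv_mem hh

set_option maxHeartbeats 1000000 in
/-- A cyclic subgroup generated by an element of maximal `p`-power order in a finite
commutative group has a complement. -/
lemma exists_complement : ∀ (N : ℕ) (A : Type u) [CommGroup A] [Finite A],
    Nat.card A ≤ N → ∀ (p k : ℕ), p.Prime → ∀ x : A, orderOf x = p ^ k →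
    (∀ y : A, ¬ p ^ (k + 1) ∣ orderOf y) →
    ∃ B : Subgroup A, zpowers x ⊓ B = ⊥ ∧ zpowers x ⊔ B = ⊤ := by
  intro N
  induction N with
  | zero => intro A _ _ hcard; exact absurd hcard (by have := Nat.card_pos (α := A); omega)
  | succ N ih =>
    intro A _ _ hcard p k hp x hx hmax
    by_cases hxt : zpowers x = ⊤
    · exact ⟨⊥, by simp, by simp [hxt]⟩
    -- Find w ≠ 1 with ⟨w⟩ ⊓ ⟨x⟩ = ⊥.
    have hw : ∃ w : A, w ≠ 1 ∧ zpowers w ⊓ zpowers x = ⊥ := by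
      obtain ⟨a, ha⟩ : ∃ a : A, a ∉ zpowers x := by
        by_contra h
        push_neg at h
        exact hxt (Subgroup.eq_top_iff' _ |>.mpr h)
      set Q := A ⧸ zpowers x with hQ
      have hmk : (QuotientGroup.mk a : Q) ≠ 1 := by
        simpa [QuotientGroup.eq_one_iff] using ha
      have hord : orderOf (QuotientGroup.mk a : Q) ≠ 1 := by
        simpa [orderOf_eq_one_iff] using hmk
      have hordpos : orderOf (QuotientGroup.mk a : Q) ≠ 0 :=
        (isOfFinOrder_of_finite _).orderOf_pos.ne'
      set q := (orderOf (QuotientGroup.mk a : Q)).minFac with hq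
      have hqprime : q.Prime := Nat.minFac_prime hord
      have hqdvd : q ∣ orderOf (QuotientGroup.mk a : Q) := Nat.minFac_dvd _
      set zb : Q := (QuotientGroup.mk a) ^ (orderOf (QuotientGroup.mk a : Q) / q) with hzb
      have hzbord : orderOf zb = q := orderOf_pow_orderOf_div hordpos hqdvd
      obtain ⟨z, hz⟩ : ∃ z : A, (QuotientGroup.mk z : Q) = zb := ⟨_, rfl⟩
      have hzdvd : q ∣ orderOf z := by
        have h2 := orderOf_map_dvd (QuotientGroup.mk' (zpowers x)) z
        rw [QuotientGroup.mk'_apply, hz, hzbord] at h2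
        exact h2
      have hzpos : orderOf z ≠ 0 := (isOfFinOrder_of_finite z).orderOf_pos.ne'
      by_cases hqp : q = p
      · -- q = p : adjust to get an element of order p with trivial intersection
        subst hqp
        set c := orderOf z with hc
        set a' := c.factorization q with ha'
        set m' := c / q ^ a' with hm'
        have hm'dvd : m' ∣ c := Nat.ordCompl_dvd c q
        have hm'pos : m' ≠ 0 := (Nat.ordCompl_pos q hzpos).ne'
        have hndvd : ¬ q ∣ m' := Nat.not_dvd_ordCompl hqprime hzpos
        set u := z ^ m' with hu
        have huord : orderOf u = q ^ a' := by
          rw [hu, orderOf_pow_of_dvd hm'pos hm'dvd, ← hc, hm',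
            Nat.div_div_self (Nat.ordProj_dvd c q) hzpos]
        have hmku : (QuotientGroup.mk u : Q) = zb ^ m' := by
          rw [hu, ← hz]; rfl
        have hmkuord : orderOf (QuotientGroup.mk u : Q) = q := by
          rw [hmku, Nat.Coprime.orderOf_pow, hzbord]
          rw [hzbord]
          exact (hqprime.coprime_iff_not_dvd.mpr hndvd)
        have hmku1 : (QuotientGroup.mk u : Q) ≠ 1 := by
          intro h; rw [h, orderOf_one] at hmkuord; exact hqprime.one_lt.ne' hmkuord.symm
        have hqu : q ∣ orderOf u := by
          have h2 := orderOf_map_dvd (QuotientGroup.mk' (zpowers x)) u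
          rw [QuotientGroup.mk'_apply, hmkuord] at h2
          exact h2
        have ha'1 : 1 ≤ a' := by
          by_contra h
          push_neg at h
          rw [huord, Nat.lt_one_iff.mp h, pow_zero, Nat.dvd_one] at hqu
          exact hqprime.one_lt.ne' hqu
        have ha'k : a' ≤ k := by
          by_contra h
          push_neg at h
          exact hmax u (huord ▸ pow_dvd_pow q h)
        have hk1 : 1 ≤ k := le_trans ha'1 ha'k
        -- u ^ q ∈ zpowers x
        have humem : u ^ q ∈ zpowers x := by
          rw [← QuotientGroup.eq_one_iff (G := A) (N := zpowers x)]
          push_cast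
          rw [← QuotientGroup.mk'_apply, map_pow, QuotientGroup.mk'_apply]
          rw [← hmkuord]
          exact pow_orderOf_eq_one _
        obtain ⟨t, ht⟩ := Subgroup.mem_zpowers_iff.mp humem
        have h4 : u ^ (q * q ^ (k - 1)) = 1 := by
          apply orderOf_dvd_iff_pow_eq_one.mp
          rw [huord]
          have h5 : q * q ^ (k - 1) = q ^ k := by
            rw [← pow_succ']
            congr 1
            omega
          rw [h5]
          exact pow_dvd_pow q ha'k
        have hxk : x ^ (t * (q : ℤ) ^ (k - 1)) = 1 := by
          calc x ^ (t * (q : ℤ) ^ (k - 1)) = (x ^ t) ^ ((q : ℤ) ^ (k - 1)) := by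
                rw [← zpow_mul]
            _ = (u ^ q) ^ (((q ^ (k - 1) : ℕ) : ℤ)) := by rw [ht]; norm_cast
            _ = (u ^ q) ^ (q ^ (k - 1) : ℕ) := zpow_natCast _ _
            _ = u ^ (q * q ^ (k - 1)) := by rw [pow_mul]
            _ = 1 := h4
        -- deduce q ∣ t
        obtain ⟨s, hs⟩ : ((q : ℤ)) ∣ t := by
          obtain ⟨s, hs⟩ := orderOf_dvd_iff_zpow_eq_one.mpr hxk
          rw [hx] at hs
          push_cast at hs
          have hq0 : ((q : ℤ)) ^ (k - 1) ≠ 0 := by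
            have := hqprime.pos
            positivity
          refine ⟨s, mul_right_cancel₀ hq0 ?_⟩
          rw [hs]
          have h6 : ((q : ℤ)) ^ k = (q : ℤ) ^ (k - 1) * q := by
            rw [← pow_succ]
            congr 1
            omega
          rw [h6]
          ring
        set w := u * (x ^ s)⁻¹ with hwdef
        have hx1 : (QuotientGroup.mk x : Q) = 1 :=
          (QuotientGroup.eq_one_iff _).mpr (mem_zpowers x)
        have hmkw : (QuotientGroup.mk w : Q) = QuotientGroup.mk u := by
          rw [hwdef, QuotientGroup.mk_mul, QuotientGroup.mk_inv, QuotientGroup.mk_zpow, hx1]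
          simp
        have hwq : w ^ q = 1 := by
          have h7 : w ^ q = u ^ q * ((x ^ s) ^ ((q : ℤ)))⁻¹ := by
            rw [hwdef, mul_pow, inv_pow, ← zpow_natCast (x ^ s)]
          rw [h7, ← ht, hs, ← zpow_mul, mul_inv_eq_one]
          congr 1
          ring
        refine ⟨w, ?_, ?_⟩
        · intro h
          rw [h] at hmkw
          exact hmku1 hmkw.symm
        · rw [eq_bot_iff]
          rintro y ⟨hy1, hy2⟩
          obtain ⟨i, hi⟩ := Subgroup.mem_zpowers_iff.mp hy1
          have hmy : (QuotientGroup.mk y : Q) = 1 := (QuotientGroup.eq_one_iff _).mpr hy2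
          have h8 : ((QuotientGroup.mk u : Q)) ^ i = 1 := by
            rw [← hmkw, ← QuotientGroup.mk_zpow, hi, hmy]
          obtain ⟨i', hi'⟩ : ((q : ℤ)) ∣ i := by
            have := orderOf_dvd_iff_zpow_eq_one.mpr h8
            rwa [hmkuord] at this
          rw [Subgroup.mem_bot, ← hi, hi', zpow_mul, zpow_natCast, hwq, one_zpow]
      · -- q ≠ p : coprime orders give trivial intersection
        refine ⟨z ^ (orderOf z / q), ?_, ?_⟩
        · have h1 : orderOf (z ^ (orderOf z / q)) = q := orderOf_pow_orderOf_div hzpos hzdvd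
          intro h2
          rw [h2, orderOf_one] at h1
          exact hqprime.one_lt.ne' h1.symm
        · rw [eq_bot_iff]
          rintro y ⟨hy1, hy2⟩
          have hd1 : orderOf y ∣ q := by
            have h3 := orderOf_dvd_of_mem_zpowers' hy1
            rwa [orderOf_pow_orderOf_div hzpos hzdvd] at h3
          have hd2 : orderOf y ∣ p ^ k := hx ▸ orderOf_dvd_of_mem_zpowers' hy2
          have hcop : Nat.Coprime q p :=
            hqprime.coprime_iff_not_dvd.mpr
              (fun h => hqp ((Nat.prime_dvd_prime_iff_eq hqprime hp).mp h))
          have : orderOf y = 1 :=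
            Nat.Coprime.eq_one_of_dvd
              (Nat.Coprime.coprime_dvd_left hd1 (hcop.pow_right k)) hd2
          rw [Subgroup.mem_bot, ← orderOf_eq_one_iff]
          exact this
    -- Now quotient by ⟨w⟩ and use the inductive hypothesis.
    obtain ⟨w, hw1, hwx⟩ := hw
    set W := zpowers w with hW
    set Q' := A ⧸ W with hQ'
    have hwo2 : 2 ≤ orderOf w := by
      have h0 : orderOf w ≠ 0 := (isOfFinOrder_of_finite w).orderOf_pos.ne'
      have h1 : orderOf w ≠ 1 := fun h => hw1 (orderOf_eq_one_iff.mp h)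
      omega
    have hcard' : Nat.card Q' ≤ N := by
      have h1 : Nat.card A = Nat.card Q' * Nat.card W :=
        Subgroup.card_eq_card_quotient_mul_card_subgroup W
      have h2 : Nat.card W = orderOf w := Nat.card_zpowers w
      have h3 : 0 < Nat.card Q' := Nat.card_pos
      have h4 : Nat.card Q' < Nat.card A := by
        rw [h1]
        nlinarith
      omega
    set xb : Q' := QuotientGroup.mk x with hxb
    have hxbord : orderOf xb = p ^ k := by
      have hdvd : orderOf xb ∣ p ^ k := by
        have := orderOf_map_dvd (QuotientGroup.mk' W) x
        rwa [hx] at this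
      obtain ⟨e, hek, he⟩ := (Nat.dvd_prime_pow hp).mp hdvd
      rcases Nat.lt_or_ge e k with hlt | hge
      · exfalso
        have hmem : x ^ p ^ e ∈ W := by
          rw [← QuotientGroup.eq_one_iff (G := A) (N := W)]
          rw [QuotientGroup.mk_pow, ← hxb, ← he]
          exact pow_orderOf_eq_one xb
        have : x ^ p ^ e ∈ W ⊓ zpowers x := ⟨hmem, pow_mem (mem_zpowers x) _⟩
        rw [hwx, Subgroup.mem_bot] at this
        have hdvd2 : p ^ k ∣ p ^ e := hx ▸ orderOf_dvd_of_pow_eq_one this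
        have := Nat.pow_dvd_pow_iff_le_right hp.one_lt |>.mp hdvd2
        omega
      · rw [he]
        congr 1
        omega
    have hmax' : ∀ yb : Q', ¬ p ^ (k + 1) ∣ orderOf yb := by
      intro yb hdvd
      obtain ⟨y, rfl⟩ := QuotientGroup.mk'_surjective W yb
      exact hmax y (hdvd.trans (orderOf_map_dvd (QuotientGroup.mk' W) y))
    obtain ⟨Bb, hBb1, hBb2⟩ := ih Q' hcard' p k hp xb hxbord hmax'
    refine ⟨Subgroup.comap (QuotientGroup.mk' W) Bb, ?_, ?_⟩
    · rw [eq_bot_iff]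
      rintro y ⟨hy1, hy2⟩
      obtain ⟨i, hi⟩ := Subgroup.mem_zpowers_iff.mp hy1
      have hmem : (QuotientGroup.mk y : Q') ∈ zpowers xb ⊓ Bb := by
        constructor
        · rw [← hi, QuotientGroup.mk_zpow]
          exact zpow_mem (mem_zpowers xb) i
        · exact hy2
      rw [hBb1, Subgroup.mem_bot] at hmem
      have hyw : y ∈ W := (QuotientGroup.eq_one_iff _).mp hmem
      have : y ∈ W ⊓ zpowers x := ⟨hyw, hy1⟩
      rwa [hwx, Subgroup.mem_bot] at this
    · rw [eq_top_iff]
      intro c _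
      have hmem : (QuotientGroup.mk c : Q') ∈ zpowers xb ⊔ Bb := by
        rw [hBb2]; trivial
      obtain ⟨hb, hhb, bb, hbb, heq⟩ := Subgroup.mem_sup.mp hmem
      obtain ⟨i, hi⟩ := Subgroup.mem_zpowers_iff.mp hhb
      have hmemB : (x ^ i)⁻¹ * c ∈ Subgroup.comap (QuotientGroup.mk' W) Bb := by
        rw [Subgroup.mem_comap]
        have : (QuotientGroup.mk ((x ^ i)⁻¹ * c) : Q') = bb := by
          rw [QuotientGroup.mk_mul, QuotientGroup.mk_inv, QuotientGroup.mk_zpow, ← hxb, hi,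
            ← heq]
          group
        rw [QuotientGroup.mk'_apply, this]
        exact hbb
      have : c = x ^ i * ((x ^ i)⁻¹ * c) := by group
      rw [this]
      exact Subgroup.mul_mem_sup (zpow_mem (mem_zpowers x) i) hmemB

/-- If a prime power `p^m` (with `m ≥ 1`) divides a finite lcm of nonzero numbers,
it divides one of them. -/
lemma prime_pow_dvd_lcm {p m : ℕ} (hp : p.Prime) (hm : 1 ≤ m) {ι : Type*} (s : Finset ι)
    (f : ι → ℕ) (hf : ∀ i ∈ s, f i ≠ 0) (h : p ^ m ∣ s.lcm f) : ∃ i ∈ s, p ^ m ∣ f i := by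
  classical
  induction s using Finset.induction_on with
  | empty =>
      exfalso
      rw [Finset.lcm_empty, Nat.dvd_one] at h
      have := hp.one_lt
      have := Nat.one_lt_pow (n := m) (by omega) this
      omega
  | insert b t hni ih =>
      rw [Finset.lcm_insert] at h
      have hb : f b ≠ 0 := hf b (Finset.mem_insert_self b t)
      have ht : t.lcm f ≠ 0 := by
        intro h0
        rw [Finset.lcm_eq_zero_iff] at h0
        obtain ⟨i, hi, h0⟩ := h0
        exact hf i (Finset.mem_insert_of_mem hi) h0
      rw [lcm_eq_nat_lcm] at h
      have hlcm : (Nat.lcm (f b) (t.lcm f)) ≠ 0 := Nat.lcm_ne_zero hb ht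
      have hfac : m ≤ (Nat.lcm (f b) (t.lcm f)).factorization p :=
        (Nat.Prime.pow_dvd_iff_le_factorization hp hlcm).mp h
      rw [Nat.factorization_lcm hb ht] at hfac
      simp only [Finsupp.sup_apply, le_sup_iff] at hfac
      rcases hfac with hfac | hfac
      · exact ⟨b, Finset.mem_insert_self b t,
          (Nat.Prime.pow_dvd_iff_le_factorization hp hb).mpr hfac⟩
      · obtain ⟨i, hi, hd⟩ := ih (fun i hi => hf i (Finset.mem_insert_of_mem hi))
          ((Nat.Prime.pow_dvd_iff_le_factorization hp ht).mpr hfac)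
        exact ⟨i, Finset.mem_insert_of_mem hi, hd⟩

/-- In a cyclic group of order `p^kk` generated by `x`, any subgroup containing a
nontrivial power of `x` contains `x ^ p^(kk-1)`. -/
lemma pow_mem_of_zpow_mem {A : Type*} [CommGroup A] {x : A} {p kk : ℕ} (hp : p.Prime)
    (hx : orderOf x = p ^ kk) (hk : 1 ≤ kk) {K : Subgroup A} {i : ℤ}
    (hm : x ^ i ∈ K) (hne : x ^ i ≠ 1) : x ^ (p ^ (kk - 1) : ℕ) ∈ K := by
  set d : ℕ := Int.gcd i ((p : ℤ) ^ kk) with hd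
  have hppos : (p : ℤ) ≠ 0 := by exact_mod_cast hp.pos.ne'
  have hpk0 : ((p : ℤ) ^ kk) ≠ 0 := pow_ne_zero _ hppos
  have hd0 : d ≠ 0 := by
    intro h0
    rw [hd, Int.gcd_eq_zero_iff] at h0
    exact hpk0 h0.2
  have hxpk : x ^ ((p : ℤ) ^ kk) = 1 := by
    have h1 : x ^ (p ^ kk : ℕ) = 1 := by rw [← hx]; exact pow_orderOf_eq_one x
    rw [← zpow_natCast] at h1
    push_cast at h1 ⊢
    exact h1
  have hxd : x ^ (d : ℤ) ∈ K := by
    rw [hd, Int.gcd_eq_gcd_ab i ((p : ℤ) ^ kk), zpow_add, zpow_mul, zpow_mul, hxpk, one_zpow,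
      mul_one]
    exact zpow_mem hm _
  have hddvd : d ∣ p ^ kk := by
    have h1 : ((d : ℤ)) ∣ ((p ^ kk : ℕ) : ℤ) := by
      push_cast
      exact Int.gcd_dvd_right _ _
    exact_mod_cast h1
  obtain ⟨e', he'le, he'⟩ := (Nat.dvd_prime_pow hp).mp hddvd
  have he'ne : e' ≠ kk := by
    intro h0
    apply hne
    have h3 : ((d : ℤ)) ∣ i := Int.gcd_dvd_left _ _
    rw [he', h0] at h3
    push_cast at h3
    obtain ⟨c', hc'⟩ := h3
    rw [hc', zpow_mul, hxpk, one_zpow]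
  have hdd : d ∣ p ^ (kk - 1) := he' ▸ pow_dvd_pow p (by omega)
  obtain ⟨t, ht⟩ := hdd
  have hfin : x ^ (p ^ (kk - 1) : ℕ) = (x ^ (d : ℤ)) ^ (t : ℤ) := by
    rw [← zpow_mul, ← zpow_natCast x (p ^ (kk - 1))]
    congr 1
    exact_mod_cast congrArg (Nat.cast : ℕ → ℤ) ht
  rw [hfin]
  exact zpow_mem hxd _

/-- The quotient of a product of cyclic groups by one coordinate factor is isomorphic
to the product of the remaining factors. -/
lemma pi_quot_single {ι : Type*} [DecidableEq ι] (a : ι → ℕ) (i₀ : ι) [NeZero (a i₀)] :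
    Nonempty ((((i : ι) → Cyc (a i)) ⧸
        zpowers (Pi.mulSingle (M := fun i => Cyc (a i)) i₀ (ofAdd 1))) ≃*
      ((j : {j : ι // j ≠ i₀}) → Cyc (a j.1))) := by
  set g : Cyc (a i₀) := ofAdd 1 with hg
  set π : ((i : ι) → Cyc (a i)) →* ((j : {j : ι // j ≠ i₀}) → Cyc (a j.1)) :=
    { toFun := fun f j => f j.1, map_one' := rfl, map_mul' := fun _ _ => rfl } with hπ
  have hsurj : Function.Surjective π := by
    intro f
    refine ⟨fun i => if h : i = i₀ then 1 else f ⟨i, h⟩, ?_⟩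
    funext j
    simp only [hπ, MonoidHom.coe_mk, OneHom.coe_mk]
    rw [dif_neg j.2]
  have hker : π.ker = zpowers (Pi.mulSingle (M := fun i => Cyc (a i)) i₀ g) := by
    ext f
    simp only [MonoidHom.mem_ker]
    constructor
    · intro hf
      have hf' : ∀ j (h : j ≠ i₀), f j = 1 := fun j h => congrFun hf ⟨j, h⟩
      have hval : f = Pi.mulSingle i₀ (f i₀) := by
        funext j
        by_cases h : j = i₀
        · subst h; simp
        · rw [hf' j h, Pi.mulSingle_eq_of_ne h]
      have hpow : g ^ ((toAdd (f i₀)).val) = f i₀ := by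
        apply toAdd.injective
        rw [toAdd_pow, hg, toAdd_ofAdd, nsmul_eq_mul, mul_one, ZMod.natCast_val, ZMod.cast_id]
      rw [hval, ← hpow, Pi.mulSingle_pow]
      exact ⟨((toAdd (f i₀)).val : ℤ), zpow_natCast _ _⟩
    · rintro ⟨t, rfl⟩
      have h1 : π (Pi.mulSingle i₀ g) = 1 := by
        funext j
        simp only [hπ, MonoidHom.coe_mk, OneHom.coe_mk]
        exact Pi.mulSingle_eq_of_ne (M := fun i => Cyc (a i)) j.2 g
      rw [map_zpow, h1, one_zpow]
  exact ⟨(QuotientGroup.quotientMulEquivOfEq hker.symm).trans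
    (QuotientGroup.quotientKerEquivOfSurjective π hsurj)⟩

end Helpers

lemma exists_perm_hom {A : Type*} [CommGroup A] [Finite A] {ι : Type} [Fintype ι]
    (a : ι → ℕ) (h2 : ∀ i, 2 ≤ a i) (e : A ≃* ((i : ι) → Cyc (a i))) :
    ∃ f : A →* Equiv.Perm (Fin (∑ i, a i)), Function.Injective f := by
  haveI : ∀ i, NeZero (a i) := fun i => ⟨by have := h2 i; omega⟩
  let h1 : ((i : ι) → Cyc (a i)) →* ∀ i, Equiv.Perm (Cyc (a i)) :=
    Pi.monoidHom fun i =>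
      (MulAction.toPermHom (Cyc (a i)) (Cyc (a i))).comp
        (Pi.evalMonoidHom (fun i => Cyc (a i)) i)
  have h1inj : Function.Injective h1 := by
    rw [injective_iff_map_eq_one]
    intro y hy
    funext i
    have hcomp := congrFun hy i
    have happ := congrArg (fun π : Equiv.Perm (Cyc (a i)) => π (1 : Cyc (a i))) hcomp
    simpa [h1, Pi.monoidHom, MulAction.toPermHom] using happ
  let h2' := Equiv.Perm.sigmaCongrRightHom (fun i => Cyc (a i))
  have hcard : Fintype.card (Σ i, Cyc (a i)) = ∑ i, a i := by
    rw [Fintype.card_sigma]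
    congr 1
    funext i
    simp [ZMod.card]
  let σ : (Σ i, Cyc (a i)) ≃ Fin (∑ i, a i) := Fintype.equivFinOfCardEq hcard
  let h3 := Equiv.Perm.viaEmbeddingHom σ.toEmbedding
  refine ⟨h3.comp (h2'.comp (h1.comp e.toMonoidHom)), ?_⟩
  simp only [MonoidHom.coe_comp]
  exact (Equiv.Perm.viaEmbeddingHom_injective σ.toEmbedding).comp
    ((Equiv.Perm.sigmaCongrRightHom_injective).comp (h1inj.comp e.injective))

set_option maxHeartbeats 1600000 in
lemma lower_bound : ∀ (n : ℕ) (ι : Type) [Fintype ι], Fintype.card ι ≤ n →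
    ∀ (a p k : ι → ℕ), (∀ i, (p i).Prime) → (∀ i, 1 ≤ k i) → (∀ i, a i = p i ^ k i) →
    ∀ (A : Type u) [CommGroup A] [Finite A], (A ≃* ((i : ι) → Cyc (a i))) →
    ∀ (J : Type v) [Fintype J] (K : J → Subgroup A), (⨅ j, K j) = ⊥ →
    ∑ i, a i ≤ ∑ j, (K j).index := by
  intro n
  induction n with
  | zero =>
      intro ι _ hcard a p k _ _ _ A _ _ e J _ K _
      have : IsEmpty ι := Fintype.card_eq_zero_iff.mp (le_antisymm hcard (Nat.zero_le _))
      simp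
  | succ n ih =>
      intro ι _ hcard a p k hp hk ha A _ _ e J _ K hK
      classical
      rcases isEmpty_or_nonempty ι with hι | hι
      · simp
      obtain ⟨i₀, -, hmax0⟩ := Finset.exists_max_image Finset.univ a
        ⟨Classical.arbitrary ι, Finset.mem_univ _⟩
      have h2 : ∀ i, 2 ≤ a i := fun i => by
        rw [ha i]
        calc 2 ≤ p i := (hp i).two_le
          _ ≤ p i ^ k i := Nat.le_self_pow (by have := hk i; omega) _
      haveI : ∀ i, NeZero (a i) := fun i => ⟨by have := h2 i; omega⟩
      set g : Cyc (a i₀) := ofAdd 1 with hg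
      set χ : (i : ι) → Cyc (a i) := Pi.mulSingle i₀ g with hχ
      set x : A := e.symm χ with hxdef
      have hgord : orderOf g = a i₀ := by
        rw [hg, orderOf_ofAdd_eq_addOrderOf, ZMod.addOrderOf_one]
      have hχord : orderOf χ = a i₀ := by
        rw [hχ, ← hgord]
        exact orderOf_piMulSingle (M := fun i => Cyc (a i)) i₀ g
      have hxord : orderOf x = a i₀ := by
        rw [hxdef, ← hχord]
        exact orderOf_injective e.symm.toMonoidHom e.symm.injective χ
      -- maximality of the p i₀ - order
      have hmax : ∀ y : A, ¬ (p i₀) ^ (k i₀ + 1) ∣ orderOf y := by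
        intro y hdvd
        have h3 : orderOf y = orderOf (e y) :=
          (orderOf_injective e.toMonoidHom e.injective y).symm
        have h4 : orderOf (e y) ∣ Monoid.exponent ((i : ι) → Cyc (a i)) :=
          Monoid.order_dvd_exponent _
        rw [Monoid.exponent_pi] at h4
        have h5 : Finset.univ.lcm (fun i => Monoid.exponent (Cyc (a i))) ∣
            Finset.univ.lcm a := by
          apply Finset.lcm_dvd
          intro i _
          refine dvd_trans ?_ (Finset.dvd_lcm (Finset.mem_univ i))
          apply Monoid.exponent_dvd.mpr
          intro gg
          have := orderOf_dvd_natCard gg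
          rwa [Nat.card_eq_fintype_card, Fintype.card_multiplicative, ZMod.card] at this
        have h6 : p i₀ ^ (k i₀ + 1) ∣ Finset.univ.lcm a := by
          rw [h3] at hdvd
          exact hdvd.trans (h4.trans h5)
        obtain ⟨i, -, hi⟩ := prime_pow_dvd_lcm (hp i₀) (by omega) Finset.univ a
          (fun i _ => by have := h2 i; omega) h6
        rw [ha i] at hi
        have hpp : p i₀ = p i :=
          (Nat.prime_dvd_prime_iff_eq (hp i₀) (hp i)).mp
            ((hp i₀).dvd_of_dvd_pow ((dvd_pow_self (p i₀) (Nat.succ_ne_zero _)).trans hi))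
        rw [← hpp] at hi
        have hlt : k i₀ + 1 ≤ k i := (Nat.pow_dvd_pow_iff_le_right (hp i₀).one_lt).mp hi
        have hlt2 : a i₀ < a i := by
          rw [ha i, ha i₀, ← hpp]
          exact Nat.pow_lt_pow_right (hp i₀).one_lt (by omega)
        have := hmax0 i (Finset.mem_univ i)
        omega
      -- find j with x ^ (p^(k-1)) ∉ K j
      set c : ℕ := p i₀ ^ (k i₀ - 1) with hc
      have hxc : x ^ c ≠ 1 := by
        intro h0
        have hdvd := orderOf_dvd_of_pow_eq_one h0
        rw [hxord, ha i₀, hc] at hdvd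
        have := (Nat.pow_dvd_pow_iff_le_right (hp i₀).one_lt).mp hdvd
        have := hk i₀
        omega
      obtain ⟨j, hj⟩ : ∃ j : J, x ^ c ∉ K j := by
        by_contra h0
        push_neg at h0
        have : x ^ c ∈ ⨅ j, K j := Subgroup.mem_iInf.mpr h0
        rw [hK, Subgroup.mem_bot] at this
        exact hxc this
      have hxKj : zpowers x ⊓ K j = ⊥ := by
        rw [eq_bot_iff]
        rintro y ⟨hy1, hy2⟩
        obtain ⟨i, rfl⟩ := Subgroup.mem_zpowers_iff.mp hy1
        rw [Subgroup.mem_bot]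
        by_contra hne
        exact hj (pow_mem_of_zpow_mem (hp i₀) (by rw [hxord, ha i₀]) (hk i₀) hy2 hne)
      -- pass to the quotient by K j and split off x there
      set Ab := A ⧸ K j with hAb
      set xb : Ab := QuotientGroup.mk x with hxb
      have hxbord : orderOf xb = p i₀ ^ k i₀ := by
        have hdvd : orderOf xb ∣ p i₀ ^ k i₀ := by
          have := orderOf_map_dvd (QuotientGroup.mk' (K j)) x
          rwa [hxord, ha i₀] at this
        obtain ⟨e', he'k, he'⟩ := (Nat.dvd_prime_pow (hp i₀)).mp hdvd
        rcases Nat.lt_or_ge e' (k i₀) with hlt | hge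
        · exfalso
          apply hj
          have h7 : xb ^ c = 1 := by
            rw [← orderOf_dvd_iff_pow_eq_one, he', hc]
            exact pow_dvd_pow _ (by omega)
          rw [hxb, ← QuotientGroup.mk_pow] at h7
          exact (QuotientGroup.eq_one_iff _).mp h7
        · rw [he']
          congr 1
          omega
      have hmaxb : ∀ yb : Ab, ¬ (p i₀) ^ (k i₀ + 1) ∣ orderOf yb := by
        intro yb hdvd
        obtain ⟨y, rfl⟩ := QuotientGroup.mk'_surjective (K j) yb
        exact hmax y (hdvd.trans (orderOf_map_dvd (QuotientGroup.mk' (K j)) y))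
      obtain ⟨Bb, hBb1, hBb2⟩ := exists_complement (Nat.card Ab) Ab le_rfl (p i₀) (k i₀)
        (hp i₀) xb hxbord hmaxb
      set B : Subgroup A := Subgroup.comap (QuotientGroup.mk' (K j)) Bb with hB
      have hKjB : K j ≤ B := by
        intro y hy
        rw [hB, Subgroup.mem_comap]
        have h8 : (QuotientGroup.mk' (K j)) y = 1 := (QuotientGroup.eq_one_iff _).mpr hy
        rw [h8]
        exact Bb.one_mem
      have hdisj : zpowers x ⊓ B = ⊥ := by
        rw [eq_bot_iff]
        rintro y ⟨hy1, hy2⟩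
        obtain ⟨i, hi⟩ := Subgroup.mem_zpowers_iff.mp hy1
        have hmem : (QuotientGroup.mk y : Ab) ∈ zpowers xb ⊓ Bb := by
          constructor
          · rw [← hi, QuotientGroup.mk_zpow]
            exact zpow_mem (mem_zpowers xb) i
          · exact hy2
        rw [hBb1, Subgroup.mem_bot] at hmem
        have : y ∈ zpowers x ⊓ K j := ⟨hy1, (QuotientGroup.eq_one_iff _).mp hmem⟩
        rwa [hxKj] at this
      have hsup : zpowers x ⊔ B = ⊤ := by
        rw [eq_top_iff]
        intro b0 _
        have hmem : (QuotientGroup.mk b0 : Ab) ∈ zpowers xb ⊔ Bb := by rw [hBb2]; trivial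
        obtain ⟨hb, hhb, bb, hbb, heq⟩ := Subgroup.mem_sup.mp hmem
        obtain ⟨i, hi⟩ := Subgroup.mem_zpowers_iff.mp hhb
        have hmemB : (x ^ i)⁻¹ * b0 ∈ B := by
          rw [hB, Subgroup.mem_comap]
          have h8 : (QuotientGroup.mk ((x ^ i)⁻¹ * b0) : Ab) = bb := by
            rw [QuotientGroup.mk_mul, QuotientGroup.mk_inv, QuotientGroup.mk_zpow, ← hxb, hi,
              ← heq]
            group
          rw [QuotientGroup.mk'_apply, h8]
          exact hbb
        have h9 : b0 = x ^ i * ((x ^ i)⁻¹ * b0) := by group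
        rw [h9]
        exact Subgroup.mul_mem_sup (zpow_mem (mem_zpowers x) i) hmemB
      -- B is isomorphic to the product of the remaining factors
      obtain ⟨ψ⟩ := pi_quot_single a i₀
      have hmapx : (zpowers x).map (e : A →* ((i : ι) → Cyc (a i))) = zpowers χ := by
        rw [MonoidHom.map_zpowers]
        congr 1
        rw [hxdef]
        exact e.apply_symm_apply χ
      let φ : B ≃* ((j' : {j' : ι // j' ≠ i₀}) → Cyc (a j'.1)) :=
        (quotEquivOfCompl hdisj hsup).trans
          ((QuotientGroup.congr (zpowers x) (zpowers χ) e hmapx).trans ψ)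
      -- index bookkeeping
      have hBindex : B.index = a i₀ := by
        rw [Subgroup.index_eq_card]
        have e2 : (zpowers x) ≃* (A ⧸ B) :=
          quotEquivOfCompl (by rw [inf_comm]; exact hdisj) (by rw [sup_comm]; exact hsup)
        rw [← Nat.card_congr e2.toEquiv, Nat.card_zpowers, hxord]
      have hindex0 : ∀ H : Subgroup A, H.index ≠ 0 := fun H =>
        Subgroup.index_ne_zero_of_finite
      have hindexB0 : ∀ H : Subgroup (↥B), H.index ≠ 0 := fun H =>
        Subgroup.index_ne_zero_of_finite
      have hrel : ∀ l : J, ((K l).subgroupOf B).index ≤ (K l).index := by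
        intro l
        exact Nat.le_of_dvd (Nat.pos_of_ne_zero (hindex0 (K l)))
          (Subgroup.relIndex_dvd_index_of_normal (K l) B)
      have hrelj : ((K j).subgroupOf B).index * a i₀ = (K j).index := by
        rw [← hBindex]
        exact Subgroup.relIndex_mul_index hKjB
      -- cardinality bound for the remaining index type
      have hcard' : Fintype.card {j' : ι // j' ≠ i₀} ≤ n := by
        have h10 : Fintype.card {j' : ι // ¬ j' = i₀} =
            Fintype.card ι - Fintype.card {j' : ι // j' = i₀} :=
          Fintype.card_subtype_compl _
        have h11 : Fintype.card {j' : ι // j' = i₀} = 1 := Fintype.card_subtype_eq i₀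
        have h12 : 1 ≤ Fintype.card ι := Fintype.card_pos
        have h13 : Fintype.card {j' : ι // j' ≠ i₀} =
            Fintype.card {j' : ι // ¬ j' = i₀} := rfl
        omega
      -- sums split
      have hsumι : ∑ i, a i = a i₀ + ∑ j' : {j' : ι // j' ≠ i₀}, a j'.1 := by
        rw [← Finset.add_sum_erase Finset.univ a (Finset.mem_univ i₀)]
        congr 1
        rw [Finset.sum_subtype (p := fun j' => j' ≠ i₀) (Finset.univ.erase i₀)
          (fun x => by simp [Finset.mem_erase]) a]
      have hsumJ : ∑ l, (K l).index = (K j).index + ∑ l : {l : J // l ≠ j}, (K l.1).index := by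
        rw [← Finset.add_sum_erase Finset.univ (fun l => (K l).index) (Finset.mem_univ j)]
        congr 1
        rw [Finset.sum_subtype (p := fun l => l ≠ j) (Finset.univ.erase j)
          (fun x => by simp [Finset.mem_erase]) (fun l => (K l).index)]
      set cj := ((K j).subgroupOf B).index with hcj
      have hcj1 : 1 ≤ cj := Nat.pos_of_ne_zero (hindexB0 _)
      rcases Nat.lt_or_ge cj 2 with hcjlt | hcjge
      · -- cj = 1 : B ≤ K j, use the smaller family
        have hcjeq : cj = 1 := by omega
        have hBle : B ≤ K j := by
          have : (K j).relIndex B = 1 := hcjeq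
          exact Subgroup.relIndex_eq_one.mp this
        have hK'' : (⨅ l : {l : J // l ≠ j}, (K l.1).subgroupOf B) = ⊥ := by
          rw [eq_bot_iff]
          intro y hy
          rw [Subgroup.mem_iInf] at hy
          have hyA : (y : A) ∈ ⨅ l, K l := Subgroup.mem_iInf.mpr (fun l => by
            by_cases hl : l = j
            · subst hl
              exact hBle y.2
            · exact hy ⟨l, hl⟩)
          rw [hK, Subgroup.mem_bot] at hyA
          rw [Subgroup.mem_bot]
          exact Subtype.ext hyA
        have hIH := ih {j' : ι // j' ≠ i₀} hcard' (fun j' => a j'.1) (fun j' => p j'.1)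
          (fun j' => k j'.1) (fun j' => hp j'.1) (fun j' => hk j'.1) (fun j' => ha j'.1)
          (↥B) φ {l : J // l ≠ j} (fun l => (K l.1).subgroupOf B) hK''
        have hIH' : ∑ j' : {j' : ι // j' ≠ i₀}, a j'.1 ≤
            ∑ l : {l : J // l ≠ j}, ((K l.1).subgroupOf B).index := hIH
        have hsum2 : ∑ l : {l : J // l ≠ j}, ((K l.1).subgroupOf B).index ≤
            ∑ l : {l : J // l ≠ j}, (K l.1).index :=
          Finset.sum_le_sum (fun l _ => hrel l.1)
        have hKjidx : (K j).index = a i₀ := by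
          rw [← hrelj, hcjeq, one_mul]
        rw [hsumJ, hsumι, hKjidx]
        have := hIH'.trans hsum2
        omega
      · -- cj ≥ 2 : use the whole family
        have hK' : (⨅ l : J, (K l).subgroupOf B) = ⊥ := by
          rw [eq_bot_iff]
          intro y hy
          rw [Subgroup.mem_iInf] at hy
          have hyA : (y : A) ∈ ⨅ l, K l := Subgroup.mem_iInf.mpr (fun l => hy l)
          rw [hK, Subgroup.mem_bot] at hyA
          rw [Subgroup.mem_bot]
          exact Subtype.ext hyA
        have hIH := ih {j' : ι // j' ≠ i₀} hcard' (fun j' => a j'.1) (fun j' => p j'.1)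
          (fun j' => k j'.1) (fun j' => hp j'.1) (fun j' => hk j'.1) (fun j' => ha j'.1)
          (↥B) φ J (fun l => (K l).subgroupOf B) hK'
        have hIH' : ∑ j' : {j' : ι // j' ≠ i₀}, a j'.1 ≤
            ∑ l : J, ((K l).subgroupOf B).index := hIH
        have hsumJ2 : ∑ l : J, ((K l).subgroupOf B).index =
            cj + ∑ l : {l : J // l ≠ j}, ((K l.1).subgroupOf B).index := by
          rw [← Finset.add_sum_erase Finset.univ (fun l => ((K l).subgroupOf B).index)
            (Finset.mem_univ j)]
          congr 1
          rw [Finset.sum_subtype (p := fun l => l ≠ j) (Finset.univ.erase j)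
            (fun x => by simp [Finset.mem_erase]) (fun l => ((K l).subgroupOf B).index)]
        have hsum2 : ∑ l : {l : J // l ≠ j}, ((K l.1).subgroupOf B).index ≤
            ∑ l : {l : J // l ≠ j}, (K l.1).index :=
          Finset.sum_le_sum (fun l _ => hrel l.1)
        have hKjidx : (K j).index = cj * a i₀ := hrelj.symm
        have hai2 : 2 ≤ a i₀ := h2 i₀
        have hkey : a i₀ + cj ≤ cj * a i₀ := by nlinarith
        rw [hsumJ, hsumι, hKjidx]
        rw [hsumJ2] at hIH'
        linarith [hIH', hsum2, hkey]

theorem stmt0 (A : Type*) [CommGroup A] [Finite A] [Nontrivial A]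
    (n : ℕ) (a p k : Fin n → ℕ)
    (hp : ∀ i, (p i).Prime) (hk : ∀ i, 1 ≤ k i) (ha : ∀ i, a i = p i ^ k i)
    (e : A ≃* ((i : Fin n) → Cyc (a i))) :
    mu A = ∑ i, a i := by
  classical
  have h2 : ∀ i, 2 ≤ a i := fun i => by
    rw [ha i]
    calc 2 ≤ p i := (hp i).two_le
      _ ≤ p i ^ k i := Nat.le_self_pow (by have := hk i; omega) _
  obtain ⟨f0, hf0⟩ := exists_perm_hom a h2 e
  have hub : mu A ≤ ∑ i, a i := Nat.sInf_le ⟨f0, hf0⟩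
  have hne : {m | ∃ f : A →* Equiv.Perm (Fin m), Function.Injective f}.Nonempty :=
    ⟨∑ i, a i, f0, hf0⟩
  obtain ⟨f, hf⟩ : ∃ f : A →* Equiv.Perm (Fin (mu A)), Function.Injective f :=
    Nat.sInf_mem hne
  letI : MulAction A (Fin (mu A)) := MulAction.compHom _ f
  set Ω := MulAction.orbitRel.Quotient A (Fin (mu A)) with hΩ
  haveI : Fintype Ω := Fintype.ofFinite _
  set K : Ω → Subgroup A := fun ω => MulAction.stabilizer A ω.out with hKdef
  have hker : (⨅ ω : Ω, K ω) = ⊥ := by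
    rw [eq_bot_iff]
    intro y hy
    rw [Subgroup.mem_iInf] at hy
    rw [Subgroup.mem_bot]
    apply hf
    rw [map_one]
    have hsta : ∀ ω0 : Fin (mu A), y • ω0 = ω0 := by
      intro ω0
      set q : Ω := Quotient.mk'' ω0 with hq
      have hrel : q.out ∈ MulAction.orbit A ω0 := by
        have h := Quotient.mk_out' (s₁ := MulAction.orbitRel A (Fin (mu A))) ω0
        rwa [MulAction.orbitRel_apply] at h
      obtain ⟨gg, hgg⟩ := hrel
      have hyq : y • q.out = q.out := hy q
      have hgg' : gg • ω0 = q.out := hgg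
      have hyg : y • (gg • ω0) = gg • ω0 := by
        rw [hgg']
        exact hyq
      calc y • ω0 = y • ((gg⁻¹ * gg) • ω0) := by rw [inv_mul_cancel, one_smul]
        _ = gg⁻¹ • (y • (gg • ω0)) := by
              rw [← mul_smul, ← mul_smul, ← mul_smul]
              congr 1
              rw [mul_comm y (gg⁻¹ * gg), mul_assoc, mul_comm gg y, ← mul_assoc]
        _ = gg⁻¹ • (gg • ω0) := by rw [hyg]
        _ = ω0 := by rw [← mul_smul, inv_mul_cancel, one_smul]
    ext ω0
    have h := hsta ω0
    rw [MulAction.compHom_smul_def, Equiv.Perm.smul_def] at h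
    simpa using congrArg Fin.val h
  haveI hq2 : ∀ ω : Ω, Fintype (A ⧸ MulAction.stabilizer A (Quotient.out ω)) :=
    fun ω => Fintype.ofFinite _
  have heq : mu A = ∑ ω : Ω, (K ω).index := by
    calc mu A = Nat.card (Fin (mu A)) := by simp
      _ = Nat.card (Σ ω : Ω, A ⧸ MulAction.stabilizer A ω.out) :=
          Nat.card_congr (MulAction.selfEquivSigmaOrbitsQuotientStabilizer A (Fin (mu A)))
      _ = ∑ ω : Ω, Nat.card (A ⧸ MulAction.stabilizer A ω.out) := by
          rw [Nat.card_eq_fintype_card, Fintype.card_sigma]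
          exact Finset.sum_congr rfl fun ω _ => (Nat.card_eq_fintype_card).symm
      _ = ∑ ω : Ω, (K ω).index := by
          apply Finset.sum_congr rfl
          intro ω _
          rw [Subgroup.index_eq_card]
  have hlb : ∑ i, a i ≤ ∑ ω : Ω, (K ω).index :=
    lower_bound n (Fin n) (le_of_eq (Fintype.card_fin n)) a p k hp hk ha A e Ω K hker
  rw [← heq] at hlb
  exact le_antisymm hub hlb
end

section
/- In the group G = ⟨x,y,a,b | x⁴=y⁴=b³=a²=1, xy=yx, xᵃ=y, xᵇ=y, yᵇ=x⁻¹y⁻¹, bᵃ=b⁻¹⟩ (isomorphic to G(4,4,3), of order 96), the subgroup M = ⟨x², y²⟩ is the unique minimal normal subgroup of G; i.e., M is normal in G and every non-trivial normal subgroup of G contains M. -/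
set_option linter.unusedVariables false
set_option linter.dupNamespace false
set_option maxHeartbeats 1000000

section G443Aux
variable {G : Type*} [Group G]

lemma zpowv_add {g : G} {m : ℕ} [NeZero m] (hg : g ^ m = 1) (i j : ZMod m) :
    g ^ (i + j).val = g ^ i.val * g ^ j.val := by
  rw [ZMod.val_add, ← pow_eq_pow_mod _ hg, pow_add]

lemma zpowv_neg {g : G} {m : ℕ} [NeZero m] (hg : g ^ m = 1) (i : ZMod m) :
    g ^ (-i).val = (g ^ i.val)⁻¹ := by
  have h := zpowv_add hg i (-i)
  rw [show i + -i = 0 from by ring] at h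
  simp only [ZMod.val_zero, pow_zero] at h
  exact ((inv_eq_of_mul_eq_one_right h.symm).symm)

/-- normal form -/
def NF (x y a b : G) (v : ZMod 4 × ZMod 4 × ZMod 2 × ZMod 3) : G :=
  x ^ v.1.val * y ^ v.2.1.val * a ^ v.2.2.1.val * b ^ v.2.2.2.val

structure Rels (x y a b : G) : Prop where
  hx : x ^ 4 = 1
  hy : y ^ 4 = 1
  hb : b ^ 3 = 1
  ha : a ^ 2 = 1
  hxy : x * y = y * x
  hxa : a⁻¹ * x * a = y
  hxb : b⁻¹ * x * b = y
  hyb : b⁻¹ * y * b = x⁻¹ * y⁻¹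
  hba : a⁻¹ * b * a = b⁻¹

namespace Rels
variable {x y a b : G}

lemma cxy (R : Rels x y a b) : Commute x y := R.hxy
lemma haa (R : Rels x y a b) : a * a = 1 := by rw [← pow_two]; exact R.ha
lemma ainv (R : Rels x y a b) : a⁻¹ = a := inv_eq_of_mul_eq_one_right R.haa
lemma aya (R : Rels x y a b) : a⁻¹ * y * a = x := by
  calc a⁻¹ * y * a = a⁻¹ * (a⁻¹ * x * a) * a := by rw [R.hxa]
    _ = (a * a)⁻¹ * x * (a * a) := by group
    _ = x := by rw [R.haa]; group
lemma axa' (R : Rels x y a b) : a * x * a⁻¹ = y := by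
  have h := R.hxa; rw [R.ainv] at h ⊢; exact h
lemma aya' (R : Rels x y a b) : a * y * a⁻¹ = x := by
  have h := R.aya; rw [R.ainv] at h ⊢; exact h
lemma byb (R : Rels x y a b) : b * y * b⁻¹ = x := by rw [← R.hxb]; group
lemma bxb (R : Rels x y a b) : b * x * b⁻¹ = x⁻¹ * y⁻¹ := by
  have h1 : b⁻¹ * x⁻¹ * b = y⁻¹ := by rw [← R.hxb]; group
  have h3 : b⁻¹ * y⁻¹ * b = (x⁻¹ * y⁻¹)⁻¹ := by rw [← R.hyb]; group
  have h5 : b⁻¹ * (x⁻¹ * y⁻¹) * b = x := by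
    calc b⁻¹ * (x⁻¹ * y⁻¹) * b = (b⁻¹ * x⁻¹ * b) * (b⁻¹ * y⁻¹ * b) := by group
      _ = y⁻¹ * (x⁻¹ * y⁻¹)⁻¹ := by rw [h1, h3]
      _ = x := by group
  calc b * x * b⁻¹ = b * (b⁻¹ * (x⁻¹ * y⁻¹) * b) * b⁻¹ := by rw [h5]
    _ = x⁻¹ * y⁻¹ := by group
lemma ba (R : Rels x y a b) : b * a = a * b⁻¹ := by rw [← R.hba]; group
lemma b'a (R : Rels x y a b) : b⁻¹ * a = a * b := by
  have h2 : a⁻¹ * b⁻¹ * a = b := by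
    calc a⁻¹ * b⁻¹ * a = (a⁻¹ * b * a)⁻¹ := by group
      _ = b := by rw [R.hba, inv_inv]
  calc b⁻¹ * a = a * (a⁻¹ * b⁻¹ * a) := by group
    _ = a * b := by rw [h2]

-- conjugation of powers
lemma axn (R : Rels x y a b) (n : ℕ) : a * x ^ n * a⁻¹ = y ^ n := by
  rw [← conj_pow, R.axa']
lemma ayn (R : Rels x y a b) (n : ℕ) : a * y ^ n * a⁻¹ = x ^ n := by
  rw [← conj_pow, R.aya']
lemma byn (R : Rels x y a b) (n : ℕ) : b * y ^ n * b⁻¹ = x ^ n := by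
  rw [← conj_pow, R.byb]
lemma b'xn (R : Rels x y a b) (n : ℕ) : b⁻¹ * x ^ n * b = y ^ n := by
  have h : (b⁻¹ * x * b⁻¹⁻¹) ^ n = b⁻¹ * x ^ n * b⁻¹⁻¹ := conj_pow
  rw [inv_inv, R.hxb] at h
  exact h.symm
lemma bxn (R : Rels x y a b) (i : ZMod 4) :
    b * x ^ i.val * b⁻¹ = x ^ (-i).val * y ^ (-i).val := by
  rw [← conj_pow, R.bxb, (R.cxy.inv_left.inv_right).mul_pow, inv_pow, inv_pow,
    ← zpowv_neg R.hx, ← zpowv_neg R.hy]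
lemma b'yn (R : Rels x y a b) (j : ZMod 4) :
    b⁻¹ * y ^ j.val * b = x ^ (-j).val * y ^ (-j).val := by
  have h : (b⁻¹ * y * b⁻¹⁻¹) ^ j.val = b⁻¹ * y ^ j.val * b⁻¹⁻¹ := conj_pow
  rw [inv_inv, R.hyb] at h
  rw [← h, (R.cxy.inv_left.inv_right).mul_pow, inv_pow, inv_pow,
    ← zpowv_neg R.hx, ← zpowv_neg R.hy]


/-- product of two V-parts -/
lemma vmul (R : Rels x y a b) (p q r s : ZMod 4) :
    (x ^ p.val * y ^ q.val) * (x ^ r.val * y ^ s.val)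
      = x ^ (p + r).val * y ^ (q + s).val := by
  rw [zpowv_add R.hx p r, zpowv_add R.hy q s]
  calc (x ^ p.val * y ^ q.val) * (x ^ r.val * y ^ s.val)
      = x ^ p.val * (y ^ q.val * x ^ r.val) * y ^ s.val := by group
    _ = x ^ p.val * (x ^ r.val * y ^ q.val) * y ^ s.val := by
        rw [(R.cxy.symm.pow_pow q.val r.val).eq]
    _ = x ^ p.val * x ^ r.val * (y ^ q.val * y ^ s.val) := by group

lemma step_x (R : Rels x y a b) (i j : ZMod 4) (k : ZMod 2) (l : ZMod 3) :
    x * NF x y a b (i, j, k, l) = NF x y a b (1 + i, j, k, l) := by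
  show x * (x ^ i.val * y ^ j.val * a ^ k.val * b ^ l.val)
      = x ^ ((1 : ZMod 4) + i).val * y ^ j.val * a ^ k.val * b ^ l.val
  rw [zpowv_add R.hx 1 i, show ((1:ZMod 4)).val = 1 from rfl, pow_one]
  group

lemma step_xinv (R : Rels x y a b) (i j : ZMod 4) (k : ZMod 2) (l : ZMod 3) :
    x⁻¹ * NF x y a b (i, j, k, l) = NF x y a b (-1 + i, j, k, l) := by
  show x⁻¹ * (x ^ i.val * y ^ j.val * a ^ k.val * b ^ l.val)
      = x ^ ((-1 : ZMod 4) + i).val * y ^ j.val * a ^ k.val * b ^ l.val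
  rw [zpowv_add R.hx (-1) i, zpowv_neg R.hx 1,
    show ((1:ZMod 4)).val = 1 from rfl, pow_one]
  group

lemma step_y (R : Rels x y a b) (i j : ZMod 4) (k : ZMod 2) (l : ZMod 3) :
    y * NF x y a b (i, j, k, l) = NF x y a b (i, 1 + j, k, l) := by
  show y * (x ^ i.val * y ^ j.val * a ^ k.val * b ^ l.val)
      = x ^ i.val * y ^ ((1 : ZMod 4) + j).val * a ^ k.val * b ^ l.val
  rw [zpowv_add R.hy 1 j, show ((1:ZMod 4)).val = 1 from rfl, pow_one]
  calc y * (x ^ i.val * y ^ j.val * a ^ k.val * b ^ l.val)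
      = (y * x ^ i.val) * y ^ j.val * a ^ k.val * b ^ l.val := by group
    _ = (x ^ i.val * y) * y ^ j.val * a ^ k.val * b ^ l.val := by
        rw [(R.cxy.symm.pow_right i.val).eq]
    _ = x ^ i.val * (y * y ^ j.val) * a ^ k.val * b ^ l.val := by group

lemma step_yinv (R : Rels x y a b) (i j : ZMod 4) (k : ZMod 2) (l : ZMod 3) :
    y⁻¹ * NF x y a b (i, j, k, l) = NF x y a b (i, -1 + j, k, l) := by
  show y⁻¹ * (x ^ i.val * y ^ j.val * a ^ k.val * b ^ l.val)
      = x ^ i.val * y ^ ((-1 : ZMod 4) + j).val * a ^ k.val * b ^ l.val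
  rw [zpowv_add R.hy (-1) j, zpowv_neg R.hy 1,
    show ((1:ZMod 4)).val = 1 from rfl, pow_one]
  calc y⁻¹ * (x ^ i.val * y ^ j.val * a ^ k.val * b ^ l.val)
      = (y⁻¹ * x ^ i.val) * y ^ j.val * a ^ k.val * b ^ l.val := by group
    _ = (x ^ i.val * y⁻¹) * y ^ j.val * a ^ k.val * b ^ l.val := by
        rw [(R.cxy.symm.inv_left.pow_right i.val).eq]
    _ = x ^ i.val * (y⁻¹ * y ^ j.val) * a ^ k.val * b ^ l.val := by group

lemma step_a (R : Rels x y a b) (i j : ZMod 4) (k : ZMod 2) (l : ZMod 3) :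
    a * NF x y a b (i, j, k, l) = NF x y a b (j, i, 1 + k, l) := by
  show a * (x ^ i.val * y ^ j.val * a ^ k.val * b ^ l.val)
      = x ^ j.val * y ^ i.val * a ^ ((1 : ZMod 2) + k).val * b ^ l.val
  rw [zpowv_add R.ha 1 k, show ((1:ZMod 2)).val = 1 from rfl, pow_one]
  calc a * (x ^ i.val * y ^ j.val * a ^ k.val * b ^ l.val)
      = (a * x ^ i.val * a⁻¹) * (a * y ^ j.val * a⁻¹) * (a * a ^ k.val) * b ^ l.val := by
        group
    _ = y ^ i.val * x ^ j.val * (a * a ^ k.val) * b ^ l.val := by rw [R.axn, R.ayn]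
    _ = x ^ j.val * y ^ i.val * (a * a ^ k.val) * b ^ l.val := by
        rw [(R.cxy.symm.pow_pow i.val j.val).eq]

lemma step_b0 (R : Rels x y a b) (i j : ZMod 4) (l : ZMod 3) :
    b * NF x y a b (i, j, 0, l) = NF x y a b (-i + j, -i, 0, 1 + l) := by
  show b * (x ^ i.val * y ^ j.val * a ^ (0 : ZMod 2).val * b ^ l.val)
      = x ^ (-i + j).val * y ^ (-i).val * a ^ (0 : ZMod 2).val * b ^ ((1 : ZMod 3) + l).val
  rw [show ((0:ZMod 2)).val = 0 from rfl, pow_zero,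
    zpowv_add R.hx (-i) j, zpowv_add R.hb 1 l,
    show ((1:ZMod 3)).val = 1 from rfl, pow_one]
  calc b * (x ^ i.val * y ^ j.val * 1 * b ^ l.val)
      = (b * x ^ i.val * b⁻¹) * (b * y ^ j.val * b⁻¹) * (b * b ^ l.val) := by group
    _ = (x ^ (-i).val * y ^ (-i).val) * x ^ j.val * (b * b ^ l.val) := by
        rw [R.bxn, R.byn]
    _ = x ^ (-i).val * (y ^ (-i).val * x ^ j.val) * (b * b ^ l.val) := by group
    _ = x ^ (-i).val * (x ^ j.val * y ^ (-i).val) * (b * b ^ l.val) := by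
        rw [(R.cxy.symm.pow_pow (-i).val j.val).eq]
    _ = x ^ (-i).val * x ^ j.val * y ^ (-i).val * 1 * (b * b ^ l.val) := by group

lemma step_b1 (R : Rels x y a b) (i j : ZMod 4) (l : ZMod 3) :
    b * NF x y a b (i, j, 1, l) = NF x y a b (-i + j, -i, 1, -1 + l) := by
  show b * (x ^ i.val * y ^ j.val * a ^ (1 : ZMod 2).val * b ^ l.val)
      = x ^ (-i + j).val * y ^ (-i).val * a ^ (1 : ZMod 2).val * b ^ ((-1 : ZMod 3) + l).val
  rw [show ((1:ZMod 2)).val = 1 from rfl, pow_one,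
    zpowv_add R.hx (-i) j, zpowv_add R.hb (-1) l, zpowv_neg R.hb 1,
    show ((1:ZMod 3)).val = 1 from rfl, pow_one]
  calc b * (x ^ i.val * y ^ j.val * a * b ^ l.val)
      = (b * x ^ i.val * b⁻¹) * (b * y ^ j.val * b⁻¹) * ((b * a) * b ^ l.val) := by group
    _ = (x ^ (-i).val * y ^ (-i).val) * x ^ j.val * ((a * b⁻¹) * b ^ l.val) := by
        rw [R.bxn, R.byn, R.ba]
    _ = x ^ (-i).val * (y ^ (-i).val * x ^ j.val) * ((a * b⁻¹) * b ^ l.val) := by group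
    _ = x ^ (-i).val * (x ^ j.val * y ^ (-i).val) * ((a * b⁻¹) * b ^ l.val) := by
        rw [(R.cxy.symm.pow_pow (-i).val j.val).eq]
    _ = x ^ (-i).val * x ^ j.val * y ^ (-i).val * a * (b⁻¹ * b ^ l.val) := by group

lemma step_b'0 (R : Rels x y a b) (i j : ZMod 4) (l : ZMod 3) :
    b⁻¹ * NF x y a b (i, j, 0, l) = NF x y a b (-j, i + -j, 0, -1 + l) := by
  show b⁻¹ * (x ^ i.val * y ^ j.val * a ^ (0 : ZMod 2).val * b ^ l.val)
      = x ^ (-j).val * y ^ (i + -j).val * a ^ (0 : ZMod 2).val * b ^ ((-1 : ZMod 3) + l).val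
  rw [show ((0:ZMod 2)).val = 0 from rfl, pow_zero,
    zpowv_add R.hy i (-j), zpowv_add R.hb (-1) l, zpowv_neg R.hb 1,
    show ((1:ZMod 3)).val = 1 from rfl, pow_one]
  calc b⁻¹ * (x ^ i.val * y ^ j.val * 1 * b ^ l.val)
      = (b⁻¹ * x ^ i.val * b) * (b⁻¹ * y ^ j.val * b) * (b⁻¹ * b ^ l.val) := by group
    _ = y ^ i.val * (x ^ (-j).val * y ^ (-j).val) * (b⁻¹ * b ^ l.val) := by
        rw [R.b'xn, R.b'yn]
    _ = (y ^ i.val * x ^ (-j).val) * y ^ (-j).val * (b⁻¹ * b ^ l.val) := by group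
    _ = (x ^ (-j).val * y ^ i.val) * y ^ (-j).val * (b⁻¹ * b ^ l.val) := by
        rw [(R.cxy.symm.pow_pow i.val (-j).val).eq]
    _ = x ^ (-j).val * (y ^ i.val * y ^ (-j).val) * 1 * (b⁻¹ * b ^ l.val) := by group

lemma step_b'1 (R : Rels x y a b) (i j : ZMod 4) (l : ZMod 3) :
    b⁻¹ * NF x y a b (i, j, 1, l) = NF x y a b (-j, i + -j, 1, 1 + l) := by
  show b⁻¹ * (x ^ i.val * y ^ j.val * a ^ (1 : ZMod 2).val * b ^ l.val)
      = x ^ (-j).val * y ^ (i + -j).val * a ^ (1 : ZMod 2).val * b ^ ((1 : ZMod 3) + l).val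
  rw [show ((1:ZMod 2)).val = 1 from rfl, pow_one,
    zpowv_add R.hy i (-j), zpowv_add R.hb 1 l,
    show ((1:ZMod 3)).val = 1 from rfl, pow_one]
  calc b⁻¹ * (x ^ i.val * y ^ j.val * a * b ^ l.val)
      = (b⁻¹ * x ^ i.val * b) * (b⁻¹ * y ^ j.val * b) * ((b⁻¹ * a) * b ^ l.val) := by group
    _ = y ^ i.val * (x ^ (-j).val * y ^ (-j).val) * ((a * b) * b ^ l.val) := by
        rw [R.b'xn, R.b'yn, R.b'a]
    _ = (y ^ i.val * x ^ (-j).val) * y ^ (-j).val * ((a * b) * b ^ l.val) := by group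
    _ = (x ^ (-j).val * y ^ i.val) * y ^ (-j).val * ((a * b) * b ^ l.val) := by
        rw [(R.cxy.symm.pow_pow i.val (-j).val).eq]
    _ = x ^ (-j).val * (y ^ i.val * y ^ (-j).val) * a * (b * b ^ l.val) := by group


/-- Every element has a normal form. -/
lemma decomp (R : Rels x y a b) (hgen : Subgroup.closure {x, y, a, b} = ⊤) (g : G) :
    ∃ v, g = NF x y a b v := by
  have hg : g ∈ Subgroup.closure ({x, y, a, b} : Set G) := by
    rw [hgen]; exact Subgroup.mem_top g
  induction hg using Subgroup.closure_induction_left with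
  | one =>
    exact ⟨(0, 0, 0, 0), by simp [NF]⟩
  | mul_left z hz w hw ih =>
    obtain ⟨⟨i, j, k, l⟩, rfl⟩ := ih
    simp only [Set.mem_insert_iff, Set.mem_singleton_iff] at hz
    rcases hz with rfl | rfl | rfl | rfl
    · exact ⟨_, R.step_x i j k l⟩
    · exact ⟨_, R.step_y i j k l⟩
    · exact ⟨_, R.step_a i j k l⟩
    · have hk : ∀ m : ZMod 2, m = 0 ∨ m = 1 := by decide
      rcases hk k with rfl | rfl
      · exact ⟨_, R.step_b0 i j l⟩
      · exact ⟨_, R.step_b1 i j l⟩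
  | inv_mul_cancel z hz w hw ih =>
    obtain ⟨⟨i, j, k, l⟩, rfl⟩ := ih
    simp only [Set.mem_insert_iff, Set.mem_singleton_iff] at hz
    rcases hz with rfl | rfl | rfl | rfl
    · exact ⟨_, R.step_xinv i j k l⟩
    · exact ⟨_, R.step_yinv i j k l⟩
    · rw [R.ainv]; exact ⟨_, R.step_a i j k l⟩
    · have hk : ∀ m : ZMod 2, m = 0 ∨ m = 1 := by decide
      rcases hk k with rfl | rfl
      · exact ⟨_, R.step_b'0 i j l⟩
      · exact ⟨_, R.step_b'1 i j l⟩

/-- The normal form map is injective when |G| = 96. -/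
lemma nf_inj (R : Rels x y a b) (hgen : Subgroup.closure {x, y, a, b} = ⊤)
    (hcard : Nat.card G = 96) : Function.Injective (NF x y a b) := by
  have hfin : Finite G := by
    have : 0 < Nat.card G := by omega
    exact (Nat.card_pos_iff.mp this).2
  have : Fintype G := Fintype.ofFinite G
  have hsurj : Function.Surjective (NF x y a b) := by
    intro g
    obtain ⟨v, hv⟩ := R.decomp hgen g
    exact ⟨v, hv.symm⟩
  have hcards : Fintype.card (ZMod 4 × ZMod 4 × ZMod 2 × ZMod 3) = Fintype.card G := by
    have h1 : Fintype.card (ZMod 4 × ZMod 4 × ZMod 2 × ZMod 3) = 96 := by decide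
    rw [h1, ← Nat.card_eq_fintype_card, hcard]
  exact ((Fintype.bijective_iff_surjective_and_card _).mpr ⟨hsurj, hcards⟩).1

lemma y3 (R : Rels x y a b) : y ^ 3 = y⁻¹ :=
  eq_inv_of_mul_eq_one_left (by rw [← pow_succ]; exact R.hy)

lemma x2inv (R : Rels x y a b) : (x ^ 2)⁻¹ = x ^ 2 := by
  apply inv_eq_of_mul_eq_one_right
  rw [show x ^ 2 * x ^ 2 = x ^ 4 from by group]; exact R.hx

lemma y2inv (R : Rels x y a b) : (y ^ 2)⁻¹ = y ^ 2 := by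
  apply inv_eq_of_mul_eq_one_right
  rw [show y ^ 2 * y ^ 2 = y ^ 4 from by group]; exact R.hy

lemma sqxy (R : Rels x y a b) : (x⁻¹ * y⁻¹) ^ 2 = x ^ 2 * y ^ 2 := by
  rw [(R.cxy.inv_left.inv_right).mul_pow, inv_pow, inv_pow, R.x2inv, R.y2inv]

lemma ib'x2b (R : Rels x y a b) : b⁻¹ * x ^ 2 * b = y ^ 2 := R.b'xn 2

lemma ib'y2b (R : Rels x y a b) : b⁻¹ * y ^ 2 * b = x ^ 2 * y ^ 2 := by
  have h : (b⁻¹ * y * b⁻¹⁻¹) ^ 2 = b⁻¹ * y ^ 2 * b⁻¹⁻¹ := conj_pow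
  rw [inv_inv, R.hyb] at h
  rw [← h, R.sqxy]

lemma ibx2b (R : Rels x y a b) : b * x ^ 2 * b⁻¹ = x ^ 2 * y ^ 2 := by
  rw [← conj_pow, R.bxb, R.sqxy]

lemma iby2b (R : Rels x y a b) : b * y ^ 2 * b⁻¹ = x ^ 2 := R.byn 2
lemma iax2a (R : Rels x y a b) : a * x ^ 2 * a⁻¹ = y ^ 2 := R.axn 2
lemma iay2a (R : Rels x y a b) : a * y ^ 2 * a⁻¹ = x ^ 2 := R.ayn 2

lemma ib'x2y2b (R : Rels x y a b) : b⁻¹ * (x ^ 2 * y ^ 2) * b = x ^ 2 := by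
  calc b⁻¹ * (x ^ 2 * y ^ 2) * b = (b⁻¹ * x ^ 2 * b) * (b⁻¹ * y ^ 2 * b) := by group
    _ = y ^ 2 * (x ^ 2 * y ^ 2) := by rw [R.ib'x2b, R.ib'y2b]
    _ = (y ^ 2 * x ^ 2) * y ^ 2 := by group
    _ = (x ^ 2 * y ^ 2) * y ^ 2 := by rw [← (R.cxy.pow_pow 2 2).eq]
    _ = x ^ 2 * (y ^ 2 * y ^ 2) := by group
    _ = x ^ 2 := by rw [show y ^ 2 * y ^ 2 = y ^ 4 from by group, R.hy, mul_one]

lemma wb2 (R : Rels x y a b) : (b ^ 2)⁻¹ * x * b ^ 2 = x⁻¹ * y⁻¹ := by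
  calc (b ^ 2)⁻¹ * x * b ^ 2 = b⁻¹ * (b⁻¹ * x * b) * b := by rw [pow_two]; group
    _ = b⁻¹ * y * b := by rw [R.hxb]
    _ = x⁻¹ * y⁻¹ := R.hyb

lemma wab (R : Rels x y a b) : (a * b)⁻¹ * x * (a * b) = x⁻¹ * y⁻¹ := by
  calc (a * b)⁻¹ * x * (a * b) = b⁻¹ * (a⁻¹ * x * a) * b := by group
    _ = b⁻¹ * y * b := by rw [R.hxa]
    _ = x⁻¹ * y⁻¹ := R.hyb

lemma wab2 (R : Rels x y a b) : (a * b ^ 2)⁻¹ * y * (a * b ^ 2) = x⁻¹ * y⁻¹ := by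
  calc (a * b ^ 2)⁻¹ * y * (a * b ^ 2) = b⁻¹ * (b⁻¹ * (a⁻¹ * y * a) * b) * b := by
        rw [pow_two]; group
    _ = b⁻¹ * (b⁻¹ * x * b) * b := by rw [R.aya]
    _ = b⁻¹ * y * b := by rw [R.hxb]
    _ = x⁻¹ * y⁻¹ := R.hyb

lemma nfE1 (R : Rels x y a b) : NF x y a b (1, 3, 0, 0) = y⁻¹ * x := by
  show x ^ (1 : ZMod 4).val * y ^ (3 : ZMod 4).val * a ^ (0 : ZMod 2).val
      * b ^ (0 : ZMod 3).val = y⁻¹ * x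
  rw [show ((1:ZMod 4)).val = 1 from rfl, show ((3:ZMod 4)).val = 3 from rfl,
    show ((0:ZMod 2)).val = 0 from rfl, show ((0:ZMod 3)).val = 0 from rfl]
  simp only [pow_zero, mul_one, pow_one]
  rw [R.y3, ← (R.cxy.symm.inv_left).eq]

lemma nfE2 (R : Rels x y a b) : NF x y a b (2, 1, 0, 0) = y * x * x := by
  show x ^ (2 : ZMod 4).val * y ^ (1 : ZMod 4).val * a ^ (0 : ZMod 2).val
      * b ^ (0 : ZMod 3).val = y * x * x
  rw [show ((2:ZMod 4)).val = 2 from rfl, show ((1:ZMod 4)).val = 1 from rfl,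
    show ((0:ZMod 2)).val = 0 from rfl, show ((0:ZMod 3)).val = 0 from rfl]
  simp only [pow_zero, mul_one, pow_one]
  calc x ^ 2 * y = x * (x * y) := by rw [pow_two, mul_assoc]
    _ = x * (y * x) := by rw [R.hxy]
    _ = (x * y) * x := by group
    _ = (y * x) * x := by rw [R.hxy]

lemma nfE3 (R : Rels x y a b) : NF x y a b (1, 2, 0, 0) = y * x * y := by
  show x ^ (1 : ZMod 4).val * y ^ (2 : ZMod 4).val * a ^ (0 : ZMod 2).val
      * b ^ (0 : ZMod 3).val = y * x * y
  rw [show ((1:ZMod 4)).val = 1 from rfl, show ((2:ZMod 4)).val = 2 from rfl,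
    show ((0:ZMod 2)).val = 0 from rfl, show ((0:ZMod 3)).val = 0 from rfl]
  simp only [pow_zero, mul_one, pow_one]
  calc x * y ^ 2 = (x * y) * y := by rw [pow_two, ← mul_assoc]
    _ = (y * x) * y := by rw [R.hxy]

lemma nfvmul (R : Rels x y a b) (p q r s : ZMod 4) :
    NF x y a b (p, q, 0, 0) * NF x y a b (r, s, 0, 0) = NF x y a b (p + r, q + s, 0, 0) := by
  show (x ^ p.val * y ^ q.val * a ^ (0:ZMod 2).val * b ^ (0:ZMod 3).val)
      * (x ^ r.val * y ^ s.val * a ^ (0:ZMod 2).val * b ^ (0:ZMod 3).val)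
      = x ^ (p + r).val * y ^ (q + s).val * a ^ (0:ZMod 2).val * b ^ (0:ZMod 3).val
  rw [show ((0:ZMod 2)).val = 0 from rfl, show ((0:ZMod 3)).val = 0 from rfl]
  simp only [pow_zero, mul_one]
  exact R.vmul p q r s

end Rels

lemma nf_zero {x y a b : G} : NF x y a b (0, 0, 0, 0) = 1 := by
  show x ^ (0 : ZMod 4).val * y ^ (0 : ZMod 4).val * a ^ (0 : ZMod 2).val
      * b ^ (0 : ZMod 3).val = 1
  simp only [ZMod.val_zero, pow_zero, mul_one]

lemma nf_x2 {x y a b : G} : NF x y a b (2, 0, 0, 0) = x ^ 2 := by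
  show x ^ (2 : ZMod 4).val * y ^ (0 : ZMod 4).val * a ^ (0 : ZMod 2).val
      * b ^ (0 : ZMod 3).val = x ^ 2
  rw [show ((2:ZMod 4)).val = 2 from rfl]
  simp only [ZMod.val_zero, pow_zero, mul_one]

lemma nf_y2 {x y a b : G} : NF x y a b (0, 2, 0, 0) = y ^ 2 := by
  show x ^ (0 : ZMod 4).val * y ^ (2 : ZMod 4).val * a ^ (0 : ZMod 2).val
      * b ^ (0 : ZMod 3).val = y ^ 2
  rw [show ((2:ZMod 4)).val = 2 from rfl]
  simp only [ZMod.val_zero, pow_zero, mul_one, one_mul]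

lemma nf_x2y2 {x y a b : G} : NF x y a b (2, 2, 0, 0) = x ^ 2 * y ^ 2 := by
  show x ^ (2 : ZMod 4).val * y ^ (2 : ZMod 4).val * a ^ (0 : ZMod 2).val
      * b ^ (0 : ZMod 3).val = x ^ 2 * y ^ 2
  rw [show ((2:ZMod 4)).val = 2 from rfl]
  simp only [ZMod.val_zero, pow_zero, mul_one]

lemma mem_of_comm {N : Subgroup G} (hN : N.Normal) {n : G} (hn : n ∈ N) (z : G) :
    n⁻¹ * (z⁻¹ * n * z) ∈ N := mul_mem (inv_mem hn) (hN.conj_mem' n hn z)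

lemma conj_comm_eq {u w z : G} (hcom : Commute z u) :
    (u * w)⁻¹ * (z⁻¹ * (u * w) * z) = (w⁻¹ * z * w)⁻¹ * z := by
  have h3 := (hcom.inv_left.inv_right).eq
  calc (u * w)⁻¹ * (z⁻¹ * (u * w) * z) = w⁻¹ * ((u⁻¹ * z⁻¹) * u) * (w * z) := by group
    _ = w⁻¹ * ((z⁻¹ * u⁻¹) * u) * (w * z) := by rw [← h3]
    _ = (w⁻¹ * z * w)⁻¹ * z := by group

lemma conj_mem_closure_of_gen {s : Set G} {c : G}
    (hc : ∀ u ∈ s, c * u * c⁻¹ ∈ Subgroup.closure s) :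
    ∀ h ∈ Subgroup.closure s, c * h * c⁻¹ ∈ Subgroup.closure s := by
  intro h hh
  induction hh using Subgroup.closure_induction with
  | mem z hz => exact hc z hz
  | one => simpa using one_mem _
  | mul u v hu hv ihu ihv =>
      have e : c * (u * v) * c⁻¹ = (c * u * c⁻¹) * (c * v * c⁻¹) := by group
      rw [e]; exact mul_mem ihu ihv
  | inv u hu ihu =>
      have e : c * u⁻¹ * c⁻¹ = (c * u * c⁻¹)⁻¹ := by group
      rw [e]; exact inv_mem ihu

lemma mem_normalizer_of_gen {s : Set G} {c : G}
    (h1 : ∀ u ∈ s, c * u * c⁻¹ ∈ Subgroup.closure s)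
    (h2 : ∀ u ∈ s, c⁻¹ * u * c ∈ Subgroup.closure s) :
    c ∈ Subgroup.normalizer (Subgroup.closure s : Set G) := by
  rw [Subgroup.mem_normalizer_iff]
  intro h
  constructor
  · exact fun hh => conj_mem_closure_of_gen h1 h hh
  · intro hh
    have h2' : ∀ u ∈ s, c⁻¹ * u * c⁻¹⁻¹ ∈ Subgroup.closure s := by
      simpa [inv_inv] using h2
    have hmm := conj_mem_closure_of_gen h2' _ hh
    rw [show c⁻¹ * (c * h * c⁻¹) * c⁻¹⁻¹ = h from by group] at hmm
    exact hmm

end G443Aux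

open Multiplicative

theorem stmt6 (G : Type*) [Group G] (x y a b : G)
    (hx : x ^ 4 = 1) (hy : y ^ 4 = 1) (hb : b ^ 3 = 1) (ha : a ^ 2 = 1)
    (hxy : x * y = y * x) (hxa : a⁻¹ * x * a = y) (hxb : b⁻¹ * x * b = y)
    (hyb : b⁻¹ * y * b = x⁻¹ * y⁻¹) (hba : a⁻¹ * b * a = b⁻¹)
    (hgen : Subgroup.closure {x, y, a, b} = ⊤) (hcard : Nat.card G = 96) :
    (Subgroup.closure {x ^ 2, y ^ 2}).Normal ∧
    ∀ N : Subgroup G, N.Normal → N ≠ ⊥ → Subgroup.closure {x ^ 2, y ^ 2} ≤ N := by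
  have R : Rels x y a b := ⟨hx, hy, hb, ha, hxy, hxa, hxb, hyb, hba⟩
  have mx : x ^ 2 ∈ Subgroup.closure ({x ^ 2, y ^ 2} : Set G) :=
    Subgroup.subset_closure (by simp)
  have my : y ^ 2 ∈ Subgroup.closure ({x ^ 2, y ^ 2} : Set G) :=
    Subgroup.subset_closure (by simp)
  have mxy : x ^ 2 * y ^ 2 ∈ Subgroup.closure ({x ^ 2, y ^ 2} : Set G) := mul_mem mx my
  constructor
  · -- normality of ⟨x², y²⟩
    rw [← Subgroup.normalizer_eq_top_iff, eq_top_iff, ← hgen, Subgroup.closure_le]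
    intro g hg
    simp only [Set.mem_insert_iff, Set.mem_singleton_iff] at hg
    rcases hg with rfl | rfl | rfl | rfl
    · -- g = x
      apply mem_normalizer_of_gen
      · intro u hu
        simp only [Set.mem_insert_iff, Set.mem_singleton_iff] at hu
        rcases hu with rfl | rfl
        · rw [show g * g ^ 2 * g⁻¹ = g ^ 2 from by group]; exact mx
        · rw [show g * y ^ 2 * g⁻¹ = (g * y ^ 2) * g⁻¹ from by group,
            (R.cxy.pow_right 2).eq, show y ^ 2 * g * g⁻¹ = y ^ 2 from by group]
          exact my
      · intro u hu
        simp only [Set.mem_insert_iff, Set.mem_singleton_iff] at hu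
        rcases hu with rfl | rfl
        · rw [show g⁻¹ * g ^ 2 * g = g ^ 2 from by group]; exact mx
        · rw [show g⁻¹ * y ^ 2 * g = (g⁻¹ * y ^ 2) * g from by group,
            ((R.cxy.pow_right 2).inv_left).eq,
            show y ^ 2 * g⁻¹ * g = y ^ 2 from by group]
          exact my
    · -- g = y
      apply mem_normalizer_of_gen
      · intro u hu
        simp only [Set.mem_insert_iff, Set.mem_singleton_iff] at hu
        rcases hu with rfl | rfl
        · rw [show g * x ^ 2 * g⁻¹ = (g * x ^ 2) * g⁻¹ from by group,
            (R.cxy.symm.pow_right 2).eq, show x ^ 2 * g * g⁻¹ = x ^ 2 from by group]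
          exact mx
        · rw [show g * g ^ 2 * g⁻¹ = g ^ 2 from by group]; exact my
      · intro u hu
        simp only [Set.mem_insert_iff, Set.mem_singleton_iff] at hu
        rcases hu with rfl | rfl
        · rw [show g⁻¹ * x ^ 2 * g = (g⁻¹ * x ^ 2) * g from by group,
            ((R.cxy.symm.pow_right 2).inv_left).eq,
            show x ^ 2 * g⁻¹ * g = x ^ 2 from by group]
          exact mx
        · rw [show g⁻¹ * g ^ 2 * g = g ^ 2 from by group]; exact my
    · -- g = a
      have t1 : g⁻¹ * x ^ 2 * g = y ^ 2 := by
        have t := R.iax2a; rw [R.ainv] at t ⊢; exact t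
      have t2 : g⁻¹ * y ^ 2 * g = x ^ 2 := by
        have t := R.iay2a; rw [R.ainv] at t ⊢; exact t
      apply mem_normalizer_of_gen
      · intro u hu
        simp only [Set.mem_insert_iff, Set.mem_singleton_iff] at hu
        rcases hu with rfl | rfl
        · rw [R.iax2a]; exact my
        · rw [R.iay2a]; exact mx
      · intro u hu
        simp only [Set.mem_insert_iff, Set.mem_singleton_iff] at hu
        rcases hu with rfl | rfl
        · rw [t1]; exact my
        · rw [t2]; exact mx
    · -- g = b
      apply mem_normalizer_of_gen
      · intro u hu
        simp only [Set.mem_insert_iff, Set.mem_singleton_iff] at hu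
        rcases hu with rfl | rfl
        · rw [R.ibx2b]; exact mxy
        · rw [R.iby2b]; exact mx
      · intro u hu
        simp only [Set.mem_insert_iff, Set.mem_singleton_iff] at hu
        rcases hu with rfl | rfl
        · rw [R.ib'x2b]; exact my
        · rw [R.ib'y2b]; exact mxy
  · -- minimality
    intro N hN hne
    obtain ⟨⟨g, hgN⟩, hg1'⟩ := Subgroup.ne_bot_iff_exists_ne_one.mp hne
    have hg1 : g ≠ 1 := by simpa [Subtype.ext_iff] using hg1'
    obtain ⟨⟨i, j, k, l⟩, rfl⟩ := R.decomp hgen g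
    have h2cases : ∀ m : ZMod 2, m = 0 ∨ m = 1 := by decide
    have h3cases : ∀ m : ZMod 3, m = 0 ∨ m = 1 ∨ m = 2 := by decide
    have h4cases : ∀ m : ZMod 4, m = 0 ∨ m = 1 ∨ m = 2 ∨ m = 3 := by decide
    have hA : ∃ p q : ZMod 4, NF x y a b (p, q, 0, 0) ∈ N ∧ ¬(p = 0 ∧ q = 0) := by
      rcases h2cases k with rfl | rfl <;> rcases h3cases l with rfl | rfl | rfl
      · -- k = 0, l = 0
        refine ⟨i, j, hgN, ?_⟩
        rintro ⟨rfl, rfl⟩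
        exact hg1 nf_zero
      · -- k = 0, l = 1
        refine ⟨1, 3, ?_, by decide⟩
        have hn : NF x y a b (i, j, 0, 1) = x ^ i.val * y ^ j.val * (b) := by
          show x ^ i.val * y ^ j.val * a ^ (0:ZMod 2).val * b ^ (1:ZMod 3).val = _
          rw [show ((0:ZMod 2)).val = 0 from rfl, show ((1:ZMod 3)).val = 1 from rfl]
          group
        rw [hn] at hgN
        have hcom : Commute x (x ^ i.val * y ^ j.val) :=
          ((Commute.refl x).pow_right i.val).mul_right (R.cxy.pow_right j.val)
        have hmem := mem_of_comm hN hgN x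
        rw [conj_comm_eq hcom] at hmem
        rw [R.hxb, ← R.nfE1] at hmem
        exact hmem
      · -- k = 0, l = 2
        refine ⟨2, 1, ?_, by decide⟩
        have hn : NF x y a b (i, j, 0, 2) = x ^ i.val * y ^ j.val * (b ^ 2) := by
          show x ^ i.val * y ^ j.val * a ^ (0:ZMod 2).val * b ^ (2:ZMod 3).val = _
          rw [show ((0:ZMod 2)).val = 0 from rfl, show ((2:ZMod 3)).val = 2 from rfl]
          group
        rw [hn] at hgN
        have hcom : Commute x (x ^ i.val * y ^ j.val) :=
          ((Commute.refl x).pow_right i.val).mul_right (R.cxy.pow_right j.val)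
        have hmem := mem_of_comm hN hgN x
        rw [conj_comm_eq hcom] at hmem
        rw [R.wb2, show (x⁻¹ * y⁻¹)⁻¹ * x = y * x * x from by group, ← R.nfE2] at hmem
        exact hmem
      · -- k = 1, l = 0
        refine ⟨1, 3, ?_, by decide⟩
        have hn : NF x y a b (i, j, 1, 0) = x ^ i.val * y ^ j.val * (a) := by
          show x ^ i.val * y ^ j.val * a ^ (1:ZMod 2).val * b ^ (0:ZMod 3).val = _
          rw [show ((1:ZMod 2)).val = 1 from rfl, show ((0:ZMod 3)).val = 0 from rfl]
          group
        rw [hn] at hgN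
        have hcom : Commute x (x ^ i.val * y ^ j.val) :=
          ((Commute.refl x).pow_right i.val).mul_right (R.cxy.pow_right j.val)
        have hmem := mem_of_comm hN hgN x
        rw [conj_comm_eq hcom] at hmem
        rw [R.hxa, ← R.nfE1] at hmem
        exact hmem
      · -- k = 1, l = 1
        refine ⟨2, 1, ?_, by decide⟩
        have hn : NF x y a b (i, j, 1, 1) = x ^ i.val * y ^ j.val * (a * b) := by
          show x ^ i.val * y ^ j.val * a ^ (1:ZMod 2).val * b ^ (1:ZMod 3).val = _
          rw [show ((1:ZMod 2)).val = 1 from rfl, show ((1:ZMod 3)).val = 1 from rfl]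
          group
        rw [hn] at hgN
        have hcom : Commute x (x ^ i.val * y ^ j.val) :=
          ((Commute.refl x).pow_right i.val).mul_right (R.cxy.pow_right j.val)
        have hmem := mem_of_comm hN hgN x
        rw [conj_comm_eq hcom] at hmem
        rw [R.wab, show (x⁻¹ * y⁻¹)⁻¹ * x = y * x * x from by group, ← R.nfE2] at hmem
        exact hmem
      · -- k = 1, l = 2
        refine ⟨1, 2, ?_, by decide⟩
        have hn : NF x y a b (i, j, 1, 2) = x ^ i.val * y ^ j.val * (a * b ^ 2) := by
          show x ^ i.val * y ^ j.val * a ^ (1:ZMod 2).val * b ^ (2:ZMod 3).val = _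
          rw [show ((1:ZMod 2)).val = 1 from rfl, show ((2:ZMod 3)).val = 2 from rfl]
          group
        rw [hn] at hgN
        have hcom : Commute y (x ^ i.val * y ^ j.val) :=
          (R.cxy.symm.pow_right i.val).mul_right ((Commute.refl y).pow_right j.val)
        have hmem := mem_of_comm hN hgN y
        rw [conj_comm_eq hcom] at hmem
        rw [R.wab2, show (x⁻¹ * y⁻¹)⁻¹ * y = y * x * y from by group, ← R.nfE3] at hmem
        exact hmem
    obtain ⟨p, q, hvN, hpq⟩ := hA
    have hB : ∃ e ∈ N, e = x ^ 2 ∨ e = y ^ 2 ∨ e = x ^ 2 * y ^ 2 := by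
      rcases h4cases p with rfl | rfl | rfl | rfl <;>
        rcases h4cases q with rfl | rfl | rfl | rfl
      · exact absurd ⟨rfl, rfl⟩ hpq
      · refine ⟨_, mul_mem hvN hvN, ?_⟩
        rw [R.nfvmul]
        exact Or.inr (Or.inl nf_y2)
      · exact ⟨_, hvN, Or.inr (Or.inl nf_y2)⟩
      · refine ⟨_, mul_mem hvN hvN, ?_⟩
        rw [R.nfvmul]
        exact Or.inr (Or.inl nf_y2)
      · refine ⟨_, mul_mem hvN hvN, ?_⟩
        rw [R.nfvmul]
        exact Or.inl nf_x2
      · refine ⟨_, mul_mem hvN hvN, ?_⟩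
        rw [R.nfvmul]
        exact Or.inr (Or.inr nf_x2y2)
      · refine ⟨_, mul_mem hvN hvN, ?_⟩
        rw [R.nfvmul]
        exact Or.inl nf_x2
      · refine ⟨_, mul_mem hvN hvN, ?_⟩
        rw [R.nfvmul]
        exact Or.inr (Or.inr nf_x2y2)
      · exact ⟨_, hvN, Or.inl nf_x2⟩
      · refine ⟨_, mul_mem hvN hvN, ?_⟩
        rw [R.nfvmul]
        exact Or.inr (Or.inl nf_y2)
      · exact ⟨_, hvN, Or.inr (Or.inr nf_x2y2)⟩
      · refine ⟨_, mul_mem hvN hvN, ?_⟩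
        rw [R.nfvmul]
        exact Or.inr (Or.inl nf_y2)
      · refine ⟨_, mul_mem hvN hvN, ?_⟩
        rw [R.nfvmul]
        exact Or.inl nf_x2
      · refine ⟨_, mul_mem hvN hvN, ?_⟩
        rw [R.nfvmul]
        exact Or.inr (Or.inr nf_x2y2)
      · refine ⟨_, mul_mem hvN hvN, ?_⟩
        rw [R.nfvmul]
        exact Or.inl nf_x2
      · refine ⟨_, mul_mem hvN hvN, ?_⟩
        rw [R.nfvmul]
        exact Or.inr (Or.inr nf_x2y2)
    obtain ⟨e, heN, he⟩ := hB
    have hx2N : x ^ 2 ∈ N ∧ y ^ 2 ∈ N := by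
      rcases he with rfl | rfl | rfl
      · refine ⟨heN, ?_⟩
        have h := hN.conj_mem' _ heN b
        rw [R.ib'x2b] at h; exact h
      · have h1 := hN.conj_mem' _ heN b
        rw [R.ib'y2b] at h1
        have h2 := mul_mem h1 (inv_mem heN)
        rw [show x ^ 2 * y ^ 2 * (y ^ 2)⁻¹ = x ^ 2 from by group] at h2
        exact ⟨h2, heN⟩
      · have h1 := hN.conj_mem' _ heN b
        rw [R.ib'x2y2b] at h1
        have h2 := hN.conj_mem' _ h1 b
        rw [R.ib'x2b] at h2
        exact ⟨h1, h2⟩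
    rw [Subgroup.closure_le]
    rintro u hu
    simp only [Set.mem_insert_iff, Set.mem_singleton_iff] at hu
    rcases hu with rfl | rfl
    · exact hx2N.1
    · exact hx2N.2
end

section
/- In G = G(4,4,3) ≅ (C₄ × C₄) ⋊ Sym(3), every element of the cosets ⟨x,y⟩b and ⟨x,y⟩b² has order 3, and every other element of G has order dividing 8. -/
open Multiplicative

set_option maxHeartbeats 2000000 in
theorem stmt7 (G : Type*) [Group G] (x y a b : G)
    (hx : x ^ 4 = 1) (hy : y ^ 4 = 1) (hb : b ^ 3 = 1) (ha : a ^ 2 = 1)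
    (hxy : x * y = y * x) (hxa : a⁻¹ * x * a = y) (hxb : b⁻¹ * x * b = y)
    (hyb : b⁻¹ * y * b = x⁻¹ * y⁻¹) (hba : a⁻¹ * b * a = b⁻¹)
    (hgen : Subgroup.closure {x, y, a, b} = ⊤) (hcard : Nat.card G = 96) :
    (∀ g : G, (∃ h ∈ Subgroup.closure {x, y}, g = h * b) → orderOf g = 3) ∧
    (∀ g : G, (∃ h ∈ Subgroup.closure {x, y}, g = h * b ^ 2) → orderOf g = 3) ∧
    (∀ g : G, ¬(∃ h ∈ Subgroup.closure {x, y}, g = h * b) →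
      ¬(∃ h ∈ Subgroup.closure {x, y}, g = h * b ^ 2) → orderOf g ∣ 8) := by
  have hcomm : Commute x y := hxy
  set N := Subgroup.closure ({x, y} : Set G) with hNdef
  have hxN : x ∈ N := Subgroup.subset_closure (by simp)
  have hyN : y ∈ N := Subgroup.subset_closure (by simp)
  have haa : a * a = 1 := by rw [← sq]; exact ha
  have hainv : a⁻¹ = a := inv_eq_of_mul_eq_one_left haa
  have hbbb : b * b * b = 1 := by rw [show b*b*b = b^3 by rw [pow_succ, pow_succ, pow_one]]; exact hb
  have hbinv : b⁻¹ = b * b := inv_eq_of_mul_eq_one_left hbbb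
  have hx' : x ^ (4:ℤ) = 1 := by rw [show (4:ℤ) = ((4:ℕ):ℤ) by norm_num, zpow_natCast, hx]
  have hy' : y ^ (4:ℤ) = 1 := by rw [show (4:ℤ) = ((4:ℕ):ℤ) by norm_num, zpow_natCast, hy]
  have merge : ∀ p q r s : ℤ, (x^p*y^q) * (x^r*y^s) = x^(p+r)*y^(q+s) := by
    intro p q r s
    rw [zpow_add, zpow_add, mul_assoc, ← mul_assoc (y^q), (hcomm.symm.zpow_zpow q r).eq,
      mul_assoc, ← mul_assoc]
  have memN : ∀ h ∈ N, ∃ i j : ℤ, h = x^i*y^j := by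
    intro h hh
    induction hh using Subgroup.closure_induction with
    | mem g hg =>
      rcases hg with rfl | rfl
      · exact ⟨1, 0, by simp⟩
      · exact ⟨0, 1, by simp⟩
    | one => exact ⟨0, 0, by simp⟩
    | mul g k _ _ ihg ihk =>
      obtain ⟨i, j, rfl⟩ := ihg; obtain ⟨p, q, rfl⟩ := ihk
      exact ⟨i+p, j+q, merge i j p q⟩
    | inv g _ ih =>
      obtain ⟨i, j, rfl⟩ := ih
      exact ⟨-i, -j, inv_eq_of_mul_eq_one_left (by rw [merge]; simp)⟩
  have hN4 : ∀ h ∈ N, h ^ 4 = 1 := by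
    intro h hh
    obtain ⟨i, j, rfl⟩ := memN h hh
    rw [pow_succ, pow_succ, pow_succ, pow_one, merge, merge, merge,
      show i+i+i+i = 4*i by ring, show j+j+j+j = 4*j by ring, zpow_mul, zpow_mul, hx', hy',
      one_zpow, one_zpow, one_mul]
  -- conjugation facts
  have cby : b * y * b⁻¹ = x := by rw [← hxb]; group
  have cbx : b * x * b⁻¹ = x⁻¹ * y⁻¹ := by
    have h1 : b * (x⁻¹ * y⁻¹) * b⁻¹ = y := by rw [← hyb]; group
    have h3 : (b*x*b⁻¹)⁻¹ = (b * (x⁻¹*y⁻¹) * b⁻¹) * (b * y * b⁻¹) := by group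
    rw [h1, cby] at h3
    calc b*x*b⁻¹ = ((b*x*b⁻¹)⁻¹)⁻¹ := (inv_inv _).symm
      _ = (y*x)⁻¹ := by rw [h3]
      _ = x⁻¹*y⁻¹ := mul_inv_rev _ _
  have cbxy : b * (x⁻¹ * y⁻¹) * b⁻¹ = y := by rw [← hyb]; group
  have cax : a * x * a⁻¹ = y := by rw [hainv, ← hxa, hainv]
  have cay : a * y * a⁻¹ = x := by
    rw [hainv, ← hxa, hainv]
    calc a * (a * x * a) * a = (a*a) * x * (a*a) := by group
      _ = x := by rw [haa]; group
  -- N is normal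
  have conjmem : ∀ u : G, u*x*u⁻¹ ∈ N → u*y*u⁻¹ ∈ N → ∀ h ∈ N, u*h*u⁻¹ ∈ N := by
    intro u hux huy h hh
    induction hh using Subgroup.closure_induction with
    | mem g hg => rcases hg with rfl | rfl <;> assumption
    | one =>
      have e : u*(1:G)*u⁻¹ = 1 := by group
      rw [e]; exact one_mem _
    | mul g k _ _ ihg ihk =>
      have e : u*(g*k)*u⁻¹ = (u*g*u⁻¹)*(u*k*u⁻¹) := by group
      rw [e]; exact mul_mem ihg ihk
    | inv g _ ih =>
      have e : u*g⁻¹*u⁻¹ = (u*g*u⁻¹)⁻¹ := by group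
      rw [e]; exact inv_mem ih
  have hnormalizer : ∀ u : G, u*x*u⁻¹ ∈ N → u*y*u⁻¹ ∈ N → u⁻¹*x*u ∈ N → u⁻¹*y*u ∈ N →
      u ∈ Subgroup.normalizer (N : Set G) := by
    intro u h1 h2 h3 h4
    rw [Subgroup.mem_normalizer_iff]
    intro h
    constructor
    · exact fun hh => conjmem u h1 h2 h hh
    · intro hh
      have h5 := conjmem u⁻¹ (by rwa [inv_inv]) (by rwa [inv_inv]) _ hh
      rwa [show u⁻¹*(u*h*u⁻¹)*u⁻¹⁻¹ = h by group] at h5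
  have hnorm : N.Normal := by
    rw [← Subgroup.normalizer_eq_top_iff, ← top_le_iff, ← hgen, Subgroup.closure_le]
    intro g hg
    simp only [Set.mem_insert_iff, Set.mem_singleton_iff] at hg
    rcases hg with rfl | rfl | hg' | hg'
    · exact Subgroup.le_normalizer hxN
    · exact Subgroup.le_normalizer hyN
    · rw [hg']
      refine hnormalizer a ?_ ?_ ?_ ?_
      · rw [cax]; exact hyN
      · rw [cay]; exact hxN
      · rw [hxa]; exact hyN
      · have e : a*y*a = x := by rw [show a*y*a = a*y*a⁻¹ by rw [hainv]]; exact cay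
        rw [hainv, e]; exact hxN
    · rw [hg']
      refine hnormalizer b ?_ ?_ ?_ ?_
      · rw [cbx]; exact mul_mem (inv_mem hxN) (inv_mem hyN)
      · rw [cby]; exact hxN
      · rw [hxb]; exact hyN
      · rw [hyb]; exact mul_mem (inv_mem hxN) (inv_mem hyN)
  -- b ≠ 1
  have hbne : b ≠ 1 := by
    intro hb1
    have hxy1 : x = y := by rw [← hxb, hb1]; group
    have h3 : x^(3:ℕ) = 1 := by
      have hyy : y = x⁻¹ * y⁻¹ := by rw [← hyb, hb1]; group
      rw [← hxy1] at hyy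
      calc x^(3:ℕ) = x*x*x := by rw [pow_succ, pow_succ, pow_one]
        _ = x*x*(x⁻¹*x⁻¹) := by rw [← hyy]
        _ = 1 := by group
    have hx1 : x = 1 := by
      calc x = x^(4:ℕ) * (x^(3:ℕ))⁻¹ := by group
        _ = 1 := by rw [hx, h3]; simp
    have hy1 : y = 1 := by rw [← hxy1]; exact hx1
    rw [hx1, hy1, hb1] at hgen
    have hall : ∀ g : G, g = 1 ∨ g = a := by
      intro g
      have hg : g ∈ Subgroup.closure ({(1:G), 1, a, 1} : Set G) := by rw [hgen]; trivial
      induction hg using Subgroup.closure_induction with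
      | mem g hg =>
        simp only [Set.mem_insert_iff, Set.mem_singleton_iff] at hg
        tauto
      | one => left; rfl
      | mul g k _ _ ihg ihk =>
        rcases ihg with rfl | rfl <;> rcases ihk with rfl | rfl <;> simp [haa]
      | inv g _ ih =>
        rcases ih with rfl | rfl <;> simp [hainv]
    have hsurj2 : Function.Surjective (fun t : Fin 2 => if t = 0 then (1:G) else a) := by
      intro g
      rcases hall g with rfl | rfl
      · exact ⟨0, rfl⟩
      · exact ⟨1, rfl⟩
    have hle := Nat.card_le_card_of_surjective _ hsurj2
    simp only [Nat.card_eq_fintype_card, Fintype.card_fin] at hle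
    omega
  -- quotient group
  haveI : N.Normal := hnorm
  let π : G →* G ⧸ N := QuotientGroup.mk' N
  have hπx : π x = 1 := (QuotientGroup.eq_one_iff x).mpr hxN
  have hπy : π y = 1 := (QuotientGroup.eq_one_iff y).mpr hyN
  set A := π a with hAdef
  set B := π b with hBdef
  have hA2 : A * A = 1 := by rw [hAdef, ← map_mul, haa, map_one]
  have hB3 : B * (B * B) = 1 := by
    rw [hBdef, ← map_mul, ← map_mul, show b*(b*b) = 1 by rw [← mul_assoc]; exact hbbb, map_one]
  have hBA : A * B = B * (B * A) := by
    have h1 : a * b * a = b⁻¹ := by rw [← hba, hainv]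
    have h2 : a * b = b⁻¹ * a⁻¹ := by rw [← h1]; group
    have h3 : a * b = b * (b * a) := by rw [h2, hbinv, hainv, mul_assoc]
    rw [hAdef, hBdef, ← map_mul, h3, map_mul, map_mul]
  have r1 : ∀ z : G ⧸ N, A * (A * z) = z := by intro z; rw [← mul_assoc, hA2, one_mul]
  have hB3' : B * B * B = 1 := by rw [mul_assoc]; exact hB3
  have r2 : ∀ z : G ⧸ N, B * (B * (B * z)) = z := by
    intro z; rw [← mul_assoc, ← mul_assoc, hB3', one_mul]
  have r3 : ∀ z : G ⧸ N, A * (B * z) = B * (B * (A * z)) := by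
    intro z; rw [← mul_assoc, hBA, mul_assoc, mul_assoc]
  have invA : A⁻¹ = A := inv_eq_of_mul_eq_one_left hA2
  have invB : B⁻¹ = B * B := inv_eq_of_mul_eq_one_left hB3'
  have hQgen : ∀ q : G ⧸ N, q ∈ Subgroup.closure ({A, B} : Set (G ⧸ N)) := by
    have h1 : Subgroup.map π ⊤ = ⊤ :=
      Subgroup.map_top_of_surjective π (QuotientGroup.mk'_surjective N)
    have h2 : Subgroup.map π (Subgroup.closure {x,y,a,b}) ≤
        Subgroup.closure ({A, B} : Set (G ⧸ N)) := by
      rw [MonoidHom.map_closure]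
      refine (Subgroup.closure_le _).mpr ?_
      rintro q ⟨g, hg, rfl⟩
      simp only [Set.mem_insert_iff, Set.mem_singleton_iff] at hg
      rcases hg with rfl | rfl | rfl | rfl
      · rw [show π g = 1 from hπx]; exact one_mem _
      · rw [show π g = 1 from hπy]; exact one_mem _
      · exact Subgroup.subset_closure (by simp [hAdef])
      · exact Subgroup.subset_closure (by simp [hBdef])
    rw [hgen, h1] at h2
    exact fun q => h2 (Subgroup.mem_top q)
  have hclass : ∀ q : G ⧸ N,
      q = 1 ∨ q = B ∨ q = B*B ∨ q = A ∨ q = B*A ∨ q = B*(B*A) := by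
    intro q
    induction hQgen q using Subgroup.closure_induction with
    | mem g hg =>
      rcases hg with rfl | rfl
      · tauto
      · tauto
    | one => tauto
    | mul g k _ _ ihg ihk =>
      rcases ihg with rfl|rfl|rfl|rfl|rfl|rfl <;> rcases ihk with rfl|rfl|rfl|rfl|rfl|rfl <;>
        simp [mul_assoc, r1, r2, r3, hA2, hB3, hBA]
    | inv g _ ih =>
      rcases ih with rfl|rfl|rfl|rfl|rfl|rfl <;>
        simp [mul_inv_rev, invA, invB, mul_assoc, r1, r2, r3, hA2, hB3, hBA]
  -- conjugation formulas on the base group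
  have cbh : ∀ p q : ℤ, b*(x^p*y^q)*b⁻¹ = x^(-p+q)*y^(-p+0) := by
    intro p q
    calc b*(x^p*y^q)*b⁻¹ = (b*x*b⁻¹)^p * (b*y*b⁻¹)^q := by
          rw [conj_zpow, conj_zpow, conj_mul]
      _ = (x⁻¹*y⁻¹)^p * (x^q * y^(0:ℤ)) := by rw [cbx, cby, zpow_zero, mul_one]
      _ = x^(-p)*y^(-p) * (x^q * y^(0:ℤ)) := by
          rw [hcomm.inv_inv.mul_zpow, inv_zpow, inv_zpow, ← zpow_neg, ← zpow_neg]
      _ = x^(-p+q)*y^(-p+0) := merge _ _ _ _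
  have cb2h : ∀ p q : ℤ, (b*b)*(x^p*y^q)*(b*b)⁻¹ = x^(-(-p+q)+(-p+0))*y^(-(-p+q)+0) := by
    intro p q
    calc (b*b)*(x^p*y^q)*(b*b)⁻¹ = b*(b*(x^p*y^q)*b⁻¹)*b⁻¹ := by group
      _ = b*(x^(-p+q)*y^(-p+0))*b⁻¹ := by rw [cbh]
      _ = x^(-(-p+q)+(-p+0))*y^(-(-p+q)+0) := by rw [cbh]
  have zero01 : ∀ E F : ℤ, E = 0 → F = 0 → x^E*y^F = 1 := by
    intro E F hE hF; rw [hE, hF]; simp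
  have key : ∀ u v : G, (v*u)^(3:ℕ) = v * (u*v*u⁻¹) * (u*(u*v*u⁻¹)*u⁻¹) * (u*u*u) := by
    intro u v; rw [pow_succ, pow_succ, pow_one]; group
  haveI : Fact (Nat.Prime 3) := ⟨by norm_num⟩
  refine ⟨?_, ?_, ?_⟩
  · rintro g ⟨h, hh, rfl⟩
    obtain ⟨i, j, rfl⟩ := memN h hh
    have hg3 : (x^i*y^j*b)^(3:ℕ) = 1 := by
      rw [key b (x^i*y^j), cbh, cbh, hbbb, mul_one, merge, merge]
      exact zero01 _ _ (by ring) (by ring)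
    have hgne : x^i*y^j*b ≠ 1 := by
      intro h1
      have hbmem : b ∈ N := by
        have e : b = (x^i*y^j)⁻¹ := (inv_eq_of_mul_eq_one_right h1).symm
        rw [e]; exact inv_mem (mul_mem (zpow_mem hxN i) (zpow_mem hyN j))
      have hb4 := hN4 b hbmem
      refine hbne ?_
      calc b = b^(4:ℕ) * (b^(3:ℕ))⁻¹ := by group
        _ = 1 := by rw [hb4, hb]; simp
    exact orderOf_eq_prime hg3 hgne
  · rintro g ⟨h, hh, rfl⟩
    obtain ⟨i, j, rfl⟩ := memN h hh
    have hb2 : b^(2:ℕ) = b*b := by rw [pow_succ, pow_one]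
    have h6 : (b*b)*(b*b)*(b*b) = 1 := by
      calc (b*b)*(b*b)*(b*b) = (b*b*b)*(b*b*b) := by group
        _ = 1 := by rw [hbbb, one_mul]
    have hg3 : (x^i*y^j*b^(2:ℕ))^(3:ℕ) = 1 := by
      rw [hb2, key (b*b) (x^i*y^j), cb2h, cb2h, h6, mul_one, merge, merge]
      exact zero01 _ _ (by ring) (by ring)
    have hgne : x^i*y^j*b^(2:ℕ) ≠ 1 := by
      intro h1
      have hbmem : b*b ∈ N := by
        have e : b*b = (x^i*y^j)⁻¹ := by
          rw [← hb2]; exact (inv_eq_of_mul_eq_one_right h1).symm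
        rw [e]; exact inv_mem (mul_mem (zpow_mem hxN i) (zpow_mem hyN j))
      have hb4 := hN4 _ hbmem
      have hb8 : b^(8:ℕ) = 1 := by
        rw [show b^(8:ℕ) = (b*b)^(4:ℕ) by rw [← hb2, ← pow_mul]]; exact hb4
      refine hbne ?_
      calc b = (b^(3:ℕ))^(3:ℕ) * (b^(8:ℕ))⁻¹ := by group
        _ = 1 := by rw [hb, hb8]; simp
    exact orderOf_eq_prime hg3 hgne
  · rintro g hnb hnb2
    have final : ∀ q : G ⧸ N, π g = q → q * q = 1 → orderOf g ∣ 8 := by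
      intro q hq hq2
      have h2 : g * g ∈ N := by
        apply (QuotientGroup.eq_one_iff _).mp
        show π (g*g) = 1
        rw [map_mul, hq, hq2]
      have h4 := hN4 _ h2
      have h8 : g^(8:ℕ) = 1 := by
        rw [show g^(8:ℕ) = (g*g)^(4:ℕ) by rw [show g*g = g^(2:ℕ) by rw [pow_succ, pow_one],
          ← pow_mul]]; exact h4
      exact orderOf_dvd_of_pow_eq_one h8
    rcases hclass (π g) with h1|h1|h1|h1|h1|h1
    · have hgN : g ∈ N := (QuotientGroup.eq_one_iff g).mp h1
      exact dvd_trans (orderOf_dvd_of_pow_eq_one (hN4 g hgN)) (by norm_num)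
    · exfalso; apply hnb
      refine ⟨g * b⁻¹, ?_, by group⟩
      have e : π (g * b⁻¹) = 1 := by rw [map_mul, map_inv, h1, hBdef]; simp
      exact (QuotientGroup.eq_one_iff _).mp e
    · exfalso; apply hnb2
      refine ⟨g * (b^(2:ℕ))⁻¹, ?_, by group⟩
      have e : π (g * (b^(2:ℕ))⁻¹) = 1 := by
        rw [map_mul, map_inv, map_pow, h1,
          show (π b)^(2:ℕ) = B*B by rw [pow_succ, pow_one, hBdef]]
        group
      exact (QuotientGroup.eq_one_iff _).mp e
    · exact final _ h1 hA2
    · exact final _ h1 (by simp [mul_assoc, r1, r2, r3, hA2, hB3, hBA])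
    · exact final _ h1 (by simp [mul_assoc, r1, r2, r3, hA2, hB3, hBA])
end

section
/- Every core-free subgroup L of G = G(4,4,3) (a group of order 96) has index at least 12 in G. -/
open Multiplicative

/-- Sym(n) acting on the base group (C_m)^n by permuting coordinates. -/
def wreathAut (m n : ℕ) : Equiv.Perm (Fin n) →* MulAut (Fin n → Cyc m) where
  toFun σ :=
    { toFun := fun θ => θ ∘ σ.symm
      invFun := fun θ => θ ∘ σ
      left_inv := fun θ => by ext i; simp
      right_inv := fun θ => by ext i; simp
      map_mul' := fun θ₁ θ₂ => rfl }
  map_one' := by ext θ i; simp; rfl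
  map_mul' := fun σ τ => by ext θ i; rfl

/-- The wreath product C_m ≀ Sym(n). -/
abbrev Wr (m n : ℕ) := SemidirectProduct (Fin n → Cyc m) (Equiv.Perm (Fin n)) (wreathAut m n)

/-- A(m,p,n) = {θ ∈ (C_m)^n | (θ₁⋯θₙ)^{m/p} = 1}. -/
def Apn (m p n : ℕ) : Subgroup (Fin n → Cyc m) where
  carrier := {θ | (∏ i, θ i) ^ (m / p) = 1}
  one_mem' := by simp
  mul_mem' := by
    intro α β hα hβ
    simp only [Set.mem_setOf_eq, Pi.mul_apply] at *
    rw [Finset.prod_mul_distrib, mul_pow, hα, hβ, one_mul]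
  inv_mem' := by
    intro α hα
    simp only [Set.mem_setOf_eq, Pi.inv_apply] at *
    rw [Finset.prod_inv_distrib, inv_pow, hα, inv_one]

lemma apn_act_mem {m p n : ℕ} (σ : Equiv.Perm (Fin n)) {θ : Fin n → Cyc m}
    (hθ : θ ∈ Apn m p n) : wreathAut m n σ θ ∈ Apn m p n := by
  have : ∏ i, θ (σ.symm i) = ∏ i, θ i := Equiv.prod_comp σ.symm θ
  simpa [Apn, wreathAut, Subgroup.mem_mk, Set.mem_setOf_eq, Function.comp, this] using hθ

/-- G(m,p,n) = A(m,p,n) ⋊ Sym(n), realized inside C_m ≀ Sym(n). -/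
def Gmpn (m p n : ℕ) : Subgroup (Wr m n) where
  carrier := {g | g.left ∈ Apn m p n}
  one_mem' := by
    show (1 : Wr m n).left ∈ Apn m p n
    rw [SemidirectProduct.one_left]
    exact one_mem _
  mul_mem' := by
    intro g h hg hh
    show (g * h).left ∈ Apn m p n
    rw [SemidirectProduct.mul_left]
    exact mul_mem hg (apn_act_mem g.right hh)
  inv_mem' := by
    intro g hg
    show g⁻¹.left ∈ Apn m p n
    rw [SemidirectProduct.inv_left]
    exact apn_act_mem _ (inv_mem hg)
section Aux

instance : DecidableEq (Wr 4 3) := fun a b =>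
  decidable_of_iff (a.left = b.left ∧ a.right = b.right)
    (by constructor
        · rintro ⟨h1, h2⟩; cases a; cases b; simp_all
        · rintro rfl; exact ⟨rfl, rfl⟩)

instance : Fintype (Wr 4 3) :=
  Fintype.ofEquiv ((Fin 3 → Cyc 4) × Equiv.Perm (Fin 3))
    { toFun := fun p => ⟨p.1, p.2⟩
      invFun := fun s => (s.left, s.right)
      left_inv := fun p => rfl
      right_inv := fun s => by cases s; rfl }

instance : DecidablePred (· ∈ Gmpn 4 4 3) := fun g =>
  decidable_of_iff ((∏ i, g.left i) ^ (4 / 4) = 1) Iff.rfl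

/-- The projection to `Sym(3)`. -/
def fR : (Gmpn 4 4 3) →* Equiv.Perm (Fin 3) :=
  SemidirectProduct.rightHom.comp (Gmpn 4 4 3).subtype

lemma mem_fRker {x : (Gmpn 4 4 3)} : x ∈ fR.ker ↔ (x : Wr 4 3).right = 1 := Iff.rfl

instance : DecidablePred (· ∈ fR.ker) := fun x =>
  decidable_of_iff ((x : Wr 4 3).right = 1) Iff.rfl

set_option maxRecDepth 10000 in
set_option maxHeartbeats 1600000 in
lemma VG_mul_aux : ∀ a b : (Gmpn 4 4 3),
    ((a : Wr 4 3).right = 1 ∧ a * a = 1) → ((b : Wr 4 3).right = 1 ∧ b * b = 1) →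
    (((a*b : (Gmpn 4 4 3)) : Wr 4 3).right = 1 ∧ (a*b) * (a*b) = 1) := by decide

set_option maxRecDepth 10000 in
set_option maxHeartbeats 1600000 in
lemma VG_conj_aux : ∀ n g : (Gmpn 4 4 3),
    ((n : Wr 4 3).right = 1 ∧ n * n = 1) →
    (((g*n*g⁻¹ : (Gmpn 4 4 3)) : Wr 4 3).right = 1 ∧ (g*n*g⁻¹) * (g*n*g⁻¹) = 1) := by decide

/-- The unique minimal normal subgroup `V ≅ C₂ × C₂` of `G(4,4,3)`. -/
def VG : Subgroup (Gmpn 4 4 3) where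
  carrier := {g | (g : Wr 4 3).right = 1 ∧ g * g = 1}
  one_mem' := by constructor <;> simp
  mul_mem' := fun {a b} ha hb => VG_mul_aux a b ha hb
  inv_mem' := fun {a} ha => by
    have h : a⁻¹ = a := inv_eq_of_mul_eq_one_left ha.2
    rw [h]; exact ha

instance : DecidablePred (· ∈ VG) := fun g =>
  decidable_of_iff ((g : Wr 4 3).right = 1 ∧ g * g = 1) Iff.rfl

instance VG_normal : VG.Normal := ⟨fun n hn g => VG_conj_aux n g hn⟩

set_option maxRecDepth 10000 in
set_option maxHeartbeats 1600000 in
lemma cardG : Nat.card (Gmpn 4 4 3) = 96 := by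
  rw [Nat.card_eq_fintype_card]; decide

set_option maxRecDepth 10000 in
set_option maxHeartbeats 1600000 in
lemma cardAG : Nat.card fR.ker = 16 := by
  rw [Nat.card_eq_fintype_card]; decide

set_option maxRecDepth 10000 in
set_option maxHeartbeats 1600000 in
lemma cardVG : Nat.card VG = 4 := by
  rw [Nat.card_eq_fintype_card]; decide

set_option maxRecDepth 10000 in
set_option maxHeartbeats 1600000 in
lemma claimA : ∀ g w : (Gmpn 4 4 3), g^3 = 1 → g ≠ 1 →
    (w : Wr 4 3).right = 1 → w*w ≠ 1 → ∀ k : Fin 4, g*w*g⁻¹ ≠ w^(k:ℕ) := by decide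

set_option maxRecDepth 10000 in
set_option maxHeartbeats 1600000 in
lemma claimB : ∀ g v : (Gmpn 4 4 3), g^3 = 1 → g ≠ 1 →
    (v : Wr 4 3).right = 1 → v ≠ 1 → g*v*g⁻¹ ≠ v := by decide

end Aux

set_option maxHeartbeats 1600000 in
set_option synthInstance.maxHeartbeats 400000 in
theorem stmt9 (L : Subgroup (Gmpn 4 4 3)) (hL : L.normalCore = ⊥) :
    12 ≤ L.index := by
  by_contra hlt
  push_neg at hlt
  classical
  -- the coset action is faithful, so 96 ∣ (L.index)!
  have hdvd : L.index ∣ 96 := by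
    have h := Subgroup.index_dvd_card (H := L)
    rwa [cardG] at h
  have hker : (MulAction.toPermHom (Gmpn 4 4 3) ((Gmpn 4 4 3) ⧸ L)).ker = ⊥ := by
    rw [← Subgroup.normalCore_eq_ker, hL]
  have hinj := (MonoidHom.ker_eq_bot_iff _).mp hker
  have hfdvd : (96:ℕ) ∣ Nat.card (Equiv.Perm ((Gmpn 4 4 3) ⧸ L)) :=
    cardG ▸ Subgroup.card_dvd_of_injective _ hinj
  haveI : Fintype ((Gmpn 4 4 3) ⧸ L) := Fintype.ofFinite _
  have hperm : Nat.card (Equiv.Perm ((Gmpn 4 4 3) ⧸ L)) = Nat.factorial L.index := by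
    rw [Nat.card_eq_fintype_card, Fintype.card_perm, ← Nat.card_eq_fintype_card]
    rfl
  rw [hperm] at hfdvd
  have h8 : L.index = 8 := by
    clear hL hinj hker hperm
    interval_cases h : L.index <;> revert hdvd hfdvd <;> decide
  have hcardL : Nat.card L = 12 := by
    have h := L.card_mul_index
    rw [h8, cardG] at h; omega
  obtain ⟨K, hKdef⟩ : ∃ K, K = L ⊓ fR.ker := ⟨_, rfl⟩
  have hKL : K ≤ L := hKdef ▸ inf_le_left
  have hKA : K ≤ fR.ker := hKdef ▸ inf_le_right
  have h12 : Nat.card K ∣ 12 := hcardL ▸ Subgroup.card_dvd_of_le hKL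
  have h16 : Nat.card K ∣ 16 := cardAG ▸ Subgroup.card_dvd_of_le hKA
  have h4 : Nat.card K ∣ 4 := by
    have h := Nat.dvd_gcd h12 h16
    rwa [show Nat.gcd 12 16 = 4 from rfl] at h
  -- an element of order 3 in L
  haveI : Fintype L := Fintype.ofFinite _
  have h3 : 3 ∣ Fintype.card L := by
    rw [← Nat.card_eq_fintype_card, hcardL]; norm_num
  haveI : Fact (Nat.Prime 3) := ⟨by norm_num⟩
  obtain ⟨l, hlL, hord⟩ : ∃ l : (Gmpn 4 4 3), l ∈ L ∧ orderOf l = 3 := by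
    obtain ⟨l0, hl0⟩ := exists_prime_orderOf_dvd_card 3 h3
    exact ⟨l0, l0.2, by
      exact (orderOf_injective L.subtype L.subtype_injective l0).trans hl0⟩
  have hl3 : l ^ 3 = 1 := by
    have h := pow_orderOf_eq_one l
    rwa [hord] at h
  have hl1 : l ≠ 1 := by
    intro h; rw [h, orderOf_one] at hord; norm_num at hord
  have hconjK : ∀ v ∈ K, l * v * l⁻¹ ∈ K := by
    intro v hv
    rw [hKdef] at hv ⊢
    rw [Subgroup.mem_inf] at hv ⊢
    exact ⟨L.mul_mem (L.mul_mem hlL hv.1) (L.inv_mem hlL),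
      (MonoidHom.normal_ker fR).conj_mem v hv.2 l⟩
  have hKr : ∀ v ∈ K, (v : Wr 4 3).right = 1 := fun v hv => mem_fRker.mp (hKA hv)
  have hcases : Nat.card K = 1 ∨ Nat.card K = 2 ∨ Nat.card K = 4 := by
    have h1 := Nat.le_of_dvd (by norm_num) h4
    have h2 := Nat.card_pos (α := K)
    interval_cases h : Nat.card K <;> revert h4 <;> decide
  obtain hc1 | hc2 | hc4 := hcases
  · -- K trivial: L embeds into Sym(3), impossible since |L| = 12
    have hKbot : K = ⊥ := Subgroup.card_eq_one.mp hc1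
    have hinj2 : Function.Injective (fR.comp L.subtype) := by
      rw [← MonoidHom.ker_eq_bot_iff, eq_bot_iff]
      intro x hx
      have hx1 : (x : (Gmpn 4 4 3)) ∈ K := by
        rw [hKdef, Subgroup.mem_inf]
        exact ⟨x.2, MonoidHom.mem_ker.mpr (MonoidHom.mem_ker.mp hx)⟩
      rw [hKbot, Subgroup.mem_bot] at hx1
      rw [Subgroup.mem_bot]
      exact Subtype.ext hx1
    have hdvd6 : Nat.card L ∣ 6 := by
      have h := Subgroup.card_dvd_of_injective _ hinj2
      rwa [show Nat.card (Equiv.Perm (Fin 3)) = 6 by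
        rw [Nat.card_eq_fintype_card]; decide] at h
    rw [hcardL] at hdvd6; norm_num at hdvd6
  · -- |K| = 2 : K = ⟨v⟩ with v fixed by conjugation by l, impossible
    rcases K.bot_or_exists_ne_one with hb | ⟨v, hvK, hv1⟩
    · rw [hb, Subgroup.card_bot] at hc2; norm_num at hc2
    have hvr := hKr v hvK
    have hdv : orderOf v ∣ 2 := by
      have h := Subgroup.card_dvd_of_le (Subgroup.zpowers_le.mpr hvK)
      rwa [Nat.card_zpowers, hc2] at h
    have hvord : orderOf v = 2 := by
      rcases (Nat.dvd_prime Nat.prime_two).mp hdv with h | h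
      · exact absurd (orderOf_eq_one_iff.mp h) hv1
      · exact h
    have hzp : Subgroup.zpowers v = K :=
      Subgroup.eq_of_le_of_card_ge (Subgroup.zpowers_le.mpr hvK)
        (by rw [Nat.card_zpowers, hvord, hc2])
    have hu := hconjK v hvK
    rw [← hzp] at hu
    obtain ⟨n, hn⟩ := mem_powers_iff_mem_zpowers.mpr hu
    have hn' : v ^ (n % 2) = l * v * l⁻¹ := by
      have h := pow_mod_orderOf v n
      rw [hvord] at h
      exact h.trans hn
    rcases Nat.mod_two_eq_zero_or_one n with h | h
    · rw [h, pow_zero] at hn'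
      apply hv1
      calc v = l⁻¹ * (l * v * l⁻¹) * l := by group
        _ = l⁻¹ * 1 * l := by rw [← hn']
        _ = 1 := by group
    · rw [h, pow_one] at hn'
      exact claimB l v hl3 hl1 hvr hv1 hn'.symm
  · -- |K| = 4
    by_cases hex : ∃ w ∈ K, w * w ≠ 1
    · obtain ⟨w, hwK, hw2⟩ := hex
      have hwr := hKr w hwK
      have hdw : orderOf w ∣ 4 := by
        have h := Subgroup.card_dvd_of_le (Subgroup.zpowers_le.mpr hwK)
        rwa [Nat.card_zpowers, hc4] at h
      have hword : orderOf w = 4 := by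
        have h1 : orderOf w ≠ 1 := by
          intro h; exact hw2 (by rw [orderOf_eq_one_iff.mp h, one_mul])
        have h2 : orderOf w ≠ 2 := by
          intro h
          have hp := pow_orderOf_eq_one w
          rw [h, pow_two] at hp
          exact hw2 hp
        have hle := Nat.le_of_dvd (by norm_num) hdw
        have hpos := orderOf_pos w
        interval_cases h : orderOf w <;> omega
      have hzp : Subgroup.zpowers w = K :=
        Subgroup.eq_of_le_of_card_ge (Subgroup.zpowers_le.mpr hwK)
          (by rw [Nat.card_zpowers, hword, hc4])
      have hu := hconjK w hwK
      rw [← hzp] at hu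
      obtain ⟨n, hn⟩ := mem_powers_iff_mem_zpowers.mpr hu
      have hn' : w ^ (n % 4) = l * w * l⁻¹ := by
        have h := pow_mod_orderOf w n
        rw [hword] at h
        exact h.trans hn
      exact claimA l w hl3 hl1 hwr hw2 ⟨n % 4, Nat.mod_lt _ (by norm_num)⟩ hn'.symm
    · push_neg at hex
      have hKV : K ≤ VG := fun w hw => ⟨hKr w hw, hex w hw⟩
      have hKVeq : K = VG :=
        Subgroup.eq_of_le_of_card_ge hKV (by rw [cardVG, hc4])
      have hVL : VG ≤ L := hKVeq ▸ hKL
      have hVcore : VG ≤ L.normalCore := Subgroup.normal_le_normalCore.mpr hVL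
      rw [hL, le_bot_iff] at hVcore
      have h := cardVG
      rw [hVcore, Subgroup.card_bot] at h
      norm_num at h
end
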